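/- arXiv:1202.5793 — 7 statements merged into one kernel-verified Lean document; each statement's English description precedes it below -/
import Mathlib

section
/- Let a : Ω → ℂ∗ be a holomorphic nowhere-vanishing function which depends only on the entries x₁₁, x₂₂ and the product x₁₂x₂₁, i.e. a(x) = a(y) whenever x, y ∈ Ω satisfy x₁₁ = y₁₁, x₂₂ = y₂₂ and x₁₂x₂₁ = y₁₂y₂₁. Then the diagonal conjugation D̃_a : x ↦ d(x) x d(x)⁻¹, where d(x) = diag(a(x), a(x)⁻¹), is an automorphism of Ω. -/
open Matrix Set

attribute [local instance] Matrix.normedAddCommGroup Matrix.normedSpace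

noncomputable section

/-- The algebra of `2 × 2` complex matrices. -/
abbrev M2 : Type := Matrix (Fin 2) (Fin 2) ℂ

/-- The spectral ball: `2 × 2` complex matrices whose spectral radius is less than `1`. -/
def SpectralBall : Set M2 := {x : M2 | ∀ z ∈ spectrum ℂ x, ‖z‖ < 1}

/-- `f` is an automorphism of the domain `D`. -/
def IsAutomorphismOn {E : Type*} [NormedAddCommGroup E] [NormedSpace ℂ E]
    (D : Set E) (f : E → E) : Prop :=
  DifferentiableOn ℂ f D ∧ MapsTo f D D ∧
    ∃ g : E → E, DifferentiableOn ℂ g D ∧ MapsTo g D D ∧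
      (∀ x ∈ D, g (f x) = x) ∧ (∀ x ∈ D, f (g x) = x)

/-- The diagonal matrix `diag (a, a⁻¹)`. -/
def DiagMat (a : ℂ) : M2 := Matrix.diagonal ![a, a⁻¹]

lemma DiagMat_mul_inv {a : ℂ} (h : a ≠ 0) : DiagMat a * DiagMat a⁻¹ = 1 := by
  ext i j
  fin_cases i <;> fin_cases j <;>
    simp [DiagMat, Matrix.mul_apply, Fin.sum_univ_two, Matrix.one_apply,
      mul_inv_cancel₀ h, inv_mul_cancel₀ h]

/-- the unit given by `DiagMat a` for `a ≠ 0`. -/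
def DiagUnit {a : ℂ} (h : a ≠ 0) : (M2)ˣ :=
  ⟨DiagMat a, DiagMat a⁻¹, DiagMat_mul_inv h, by
    simpa [inv_inv, inv_ne_zero h] using DiagMat_mul_inv (inv_ne_zero h)⟩

lemma DiagMat_inv {a : ℂ} (h : a ≠ 0) : (DiagMat a)⁻¹ = DiagMat a⁻¹ :=
  Matrix.inv_eq_right_inv (DiagMat_mul_inv h)

lemma conj_apply (p q : Fin 2 → ℂ) (x : M2) (i j : Fin 2) :
    (Matrix.diagonal p * x * Matrix.diagonal q) i j = p i * x i j * q j := by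
  rw [Matrix.mul_diagonal, Matrix.diagonal_mul]

lemma conj_mem {a : ℂ} (h : a ≠ 0) {x : M2} (hx : x ∈ SpectralBall) :
    DiagMat a * x * (DiagMat a)⁻¹ ∈ SpectralBall := by
  intro z hz
  apply hx z
  have : DiagMat a * x * (DiagMat a)⁻¹ =
      (DiagUnit h : M2) * x * ((DiagUnit h)⁻¹ : (M2)ˣ) := by
    rw [DiagMat_inv h]; rfl
  rwa [this, spectrum.units_conjugate] at hz

lemma diff_conj (u v : M2 → ℂ) (s : Set M2) (hu : DifferentiableOn ℂ u s)
    (hv : DifferentiableOn ℂ v s) :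
    DifferentiableOn ℂ (fun x => Matrix.diagonal ![u x, v x] * x *
      Matrix.diagonal ![v x, u x]) s := by
  have key : ∀ i j : Fin 2, DifferentiableOn ℂ
      (fun x => (Matrix.diagonal ![u x, v x] * x * Matrix.diagonal ![v x, u x]) i j) s := by
    intro i j
    simp only [conj_apply]
    have hx : ∀ i j : Fin 2, DifferentiableOn ℂ (fun x : M2 => x i j) s :=
      fun i j => by
        have := (differentiable_apply (𝕜 := ℂ) (F' := fun _ : Fin 2 => ℂ) j).comp
          (differentiable_apply (𝕜 := ℂ) (F' := fun _ : Fin 2 => Fin 2 → ℂ) i)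
        exact this.differentiableOn
    fin_cases i <;> fin_cases j <;>
      simp only [Matrix.cons_val_zero, Matrix.cons_val_one, Matrix.head_cons] <;>
      exact ((by assumption : DifferentiableOn ℂ _ s).mul (hx _ _)).mul (by assumption)
  refine differentiableOn_pi.mpr ?_
  intro i
  refine differentiableOn_pi.mpr ?_
  exact fun j => key i j

/-- If a holomorphic nowhere-vanishing function `a` on the spectral ball depends only on
`x₁₁`, `x₂₂` and `x₁₂x₂₁`, then the diagonal conjugation
`x ↦ diag(a(x), a(x)⁻¹) x diag(a(x), a(x)⁻¹)⁻¹` is an automorphism of the spectral ball. -/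
theorem diagonal_conjugation_is_automorphism
    (a : M2 → ℂ) (ha : DifferentiableOn ℂ a SpectralBall)
    (ha0 : ∀ x ∈ SpectralBall, a x ≠ 0)
    (hdep : ∀ x ∈ SpectralBall, ∀ y ∈ SpectralBall,
      x 0 0 = y 0 0 → x 1 1 = y 1 1 → x 0 1 * x 1 0 = y 0 1 * y 1 0 → a x = a y) :
    IsAutomorphismOn SpectralBall
      (fun x => DiagMat (a x) * x * (DiagMat (a x))⁻¹) := by
  set f : M2 → M2 := fun x => DiagMat (a x) * x * (DiagMat (a x))⁻¹ with hf
  set g : M2 → M2 := fun x => DiagMat ((a x)⁻¹) * x * (DiagMat ((a x)⁻¹))⁻¹ with hg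
  have hainv : DifferentiableOn ℂ (fun x => (a x)⁻¹) SpectralBall := ha.inv ha0
  -- rewriting f and g on the ball
  have hfeq : ∀ x ∈ SpectralBall,
      f x = Matrix.diagonal ![a x, (a x)⁻¹] * x * Matrix.diagonal ![(a x)⁻¹, a x] := by
    intro x hx
    rw [hf]
    simp only
    rw [DiagMat_inv (ha0 x hx)]
    simp [DiagMat, inv_inv]
  have hgeq : ∀ x ∈ SpectralBall,
      g x = Matrix.diagonal ![(a x)⁻¹, a x] * x * Matrix.diagonal ![a x, (a x)⁻¹] := by
    intro x hx
    rw [hg]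
    simp only
    rw [DiagMat_inv (inv_ne_zero (ha0 x hx))]
    simp [DiagMat, inv_inv]
  -- maps to
  have hmapf : MapsTo f SpectralBall SpectralBall := fun x hx => conj_mem (ha0 x hx) hx
  have hmapg : MapsTo g SpectralBall SpectralBall :=
    fun x hx => conj_mem (inv_ne_zero (ha0 x hx)) hx
  -- a is invariant under f and g
  have entries : ∀ x ∈ SpectralBall, ∀ b : ℂ, b ≠ 0 →
      (DiagMat b * x * (DiagMat b)⁻¹) 0 0 = x 0 0 ∧
      (DiagMat b * x * (DiagMat b)⁻¹) 1 1 = x 1 1 ∧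
      (DiagMat b * x * (DiagMat b)⁻¹) 0 1 * (DiagMat b * x * (DiagMat b)⁻¹) 1 0
        = x 0 1 * x 1 0 := by
    intro x hx b hb
    rw [DiagMat_inv hb]
    simp only [DiagMat, inv_inv, conj_apply]
    refine ⟨?_, ?_, ?_⟩ <;> simp <;> field_simp <;> ring
  have haf : ∀ x ∈ SpectralBall, a (f x) = a x := by
    intro x hx
    obtain ⟨h1, h2, h3⟩ := entries x hx (a x) (ha0 x hx)
    exact hdep (f x) (hmapf hx) x hx h1 h2 h3
  have hag : ∀ x ∈ SpectralBall, a (g x) = a x := by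
    intro x hx
    obtain ⟨h1, h2, h3⟩ := entries x hx ((a x)⁻¹) (inv_ne_zero (ha0 x hx))
    exact hdep (g x) (hmapg hx) x hx h1 h2 h3
  refine ⟨?_, hmapf, g, ?_, hmapg, ?_, ?_⟩
  · exact (diff_conj a (fun x => (a x)⁻¹) SpectralBall ha hainv).congr hfeq
  · exact (diff_conj (fun x => (a x)⁻¹) a SpectralBall hainv ha).congr hgeq
  · intro x hx
    have h0 := ha0 x hx
    rw [hg]
    simp only
    rw [haf x hx, hf]
    simp only
    rw [DiagMat_inv (inv_ne_zero h0), DiagMat_inv h0]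
    have h1 : DiagMat ((a x)⁻¹) * DiagMat (a x) = 1 := by
      simpa [inv_inv, inv_ne_zero h0] using DiagMat_mul_inv (inv_ne_zero h0)
    have h2 : DiagMat (a x) * DiagMat ((a x)⁻¹) = 1 := DiagMat_mul_inv h0
    calc DiagMat ((a x)⁻¹) * (DiagMat (a x) * x * DiagMat ((a x)⁻¹)) * DiagMat ((a x)⁻¹)⁻¹
        = (DiagMat ((a x)⁻¹) * DiagMat (a x)) * x *
            (DiagMat ((a x)⁻¹) * DiagMat (a x)) := by rw [inv_inv]; noncomm_ring
      _ = x := by rw [h1]; simp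
  · intro x hx
    have h0 := ha0 x hx
    rw [hf]
    simp only
    rw [hag x hx, hg]
    simp only
    rw [DiagMat_inv (inv_ne_zero h0), DiagMat_inv h0]
    have h1 : DiagMat ((a x)⁻¹) * DiagMat (a x) = 1 := by
      simpa [inv_inv, inv_ne_zero h0] using DiagMat_mul_inv (inv_ne_zero h0)
    have h2 : DiagMat (a x) * DiagMat ((a x)⁻¹) = 1 := DiagMat_mul_inv h0
    calc DiagMat (a x) * (DiagMat ((a x)⁻¹) * x * DiagMat ((a x)⁻¹)⁻¹) * DiagMat ((a x)⁻¹)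
        = (DiagMat (a x) * DiagMat ((a x)⁻¹)) * x *
            (DiagMat (a x) * DiagMat ((a x)⁻¹)) := by rw [inv_inv]; noncomm_ring
      _ = x := by rw [h2]; simp
end
end

section
/- Let g : ℂ∗ → ℂ be a holomorphic function such that the map z ↦ exp(g(z))·z is a bijection of ℂ∗ = ℂ \ {0} onto itself. Then g is constant. -/
open Complex Filter Bornology Set Metric Function Asymptotics Topology

private lemma const_isBigO_pow_aux (a : ℂ) (n : ℕ) :
    (fun _ : ℂ => a) =O[cobounded ℂ] fun z => z ^ n := by
  rw [isBigO_iff]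
  refine ⟨‖a‖, ?_⟩
  filter_upwards [tendsto_norm_cobounded_atTop.eventually_ge_atTop 1] with z hz
  have h1 : (1 : ℝ) ≤ ‖z ^ n‖ := by
    rw [norm_pow]; exact one_le_pow₀ hz
  nlinarith [norm_nonneg a]

private lemma poly_of_isBigO_aux :
    ∀ (n : ℕ) (G : ℂ → ℂ), Differentiable ℂ G →
    (G =O[cobounded ℂ] fun z => z ^ n) → ∃ p : Polynomial ℂ, ∀ z, G z = p.eval z := by
  intro n
  induction n with
  | zero =>
    intro G hG hO
    rw [isBigO_iff] at hO
    obtain ⟨C, hC⟩ := hO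
    simp only [pow_zero, norm_one, mul_one] at hC
    rw [← comap_norm_atTop, eventually_comap, eventually_atTop] at hC
    obtain ⟨R, hR⟩ := hC
    have h1 : IsBounded (G '' closedBall 0 R) :=
      ((isCompact_closedBall (0 : ℂ) R).image hG.continuous).isBounded
    have h2 : IsBounded (range G) := by
      rw [isBounded_iff_forall_norm_le] at h1 ⊢
      obtain ⟨C', hC'⟩ := h1
      refine ⟨max C C', ?_⟩
      rintro x ⟨z, rfl⟩
      rcases le_or_gt ‖z‖ R with h | h
      · exact le_trans (hC' _ (mem_image_of_mem _ (by simpa using h))) (le_max_right _ _)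
      · exact le_trans (hR ‖z‖ h.le z rfl) (le_max_left _ _)
    exact ⟨Polynomial.C (G 0), fun z => by simpa using hG.apply_eq_apply_of_bounded h2 z 0⟩
  | succ n ih =>
    intro G hG hO
    have hd : Differentiable ℂ (dslope G 0) := by
      rw [← differentiableOn_univ] at hG ⊢
      exact (differentiableOn_dslope univ_mem).2 hG
    have hO' : (dslope G 0) =O[cobounded ℂ] fun z => z ^ n := by
      rw [isBigO_iff] at hO ⊢
      obtain ⟨C, hC⟩ := hO
      refine ⟨|C| + ‖G 0‖, ?_⟩
      filter_upwards [hC, tendsto_norm_cobounded_atTop.eventually_ge_atTop 1] with z hz hz1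
      have hzne : z ≠ 0 := by
        intro h; rw [h] at hz1; simp at hz1; linarith
      have hzpos : (0 : ℝ) < ‖z‖ := lt_of_lt_of_le one_pos hz1
      rw [dslope_of_ne _ hzne, slope_def_field, sub_zero, norm_div]
      rw [div_le_iff₀ hzpos]
      have h1 : ‖G z‖ ≤ |C| * ‖z‖ ^ (n + 1) := by
        calc ‖G z‖ ≤ C * ‖z ^ (n + 1)‖ := hz
        _ ≤ |C| * ‖z ^ (n + 1)‖ := by
            have := norm_nonneg (z ^ (n + 1))
            nlinarith [le_abs_self C]
        _ = |C| * ‖z‖ ^ (n + 1) := by rw [norm_pow]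
      have h2 : ‖G z - G 0‖ ≤ ‖G z‖ + ‖G 0‖ := norm_sub_le _ _
      have h3 : (1 : ℝ) ≤ ‖z‖ ^ (n + 1) := one_le_pow₀ hz1
      have h4 : (|C| + ‖G 0‖) * ‖z ^ n‖ * ‖z‖ = (|C| + ‖G 0‖) * ‖z‖ ^ (n + 1) := by
        rw [norm_pow]; ring
      rw [h4]
      nlinarith [norm_nonneg (G 0), abs_nonneg C]
    obtain ⟨q, hq⟩ := ih _ hd hO'
    refine ⟨Polynomial.C (G 0) + Polynomial.X * q, fun z => ?_⟩
    have key : G z = G 0 + z * dslope G 0 z := by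
      rcases eq_or_ne z 0 with rfl | hz
      · simp
      · rw [dslope_of_ne _ hz, slope_def_field, sub_zero]
        field_simp
        ring
    rw [key, hq]
    simp

/-- An entire bijection of `ℂ` is a polynomial. -/
private lemma poly_of_bijective_aux (G : ℂ → ℂ) (hGdiff : Differentiable ℂ G)
    (hinj : Function.Injective G) (hsurj : Function.Surjective G) :
    ∃ p : Polynomial ℂ, ∀ z, G z = p.eval z := by
  -- G is an open map
  have han : AnalyticOnNhd ℂ G univ := analyticOnNhd_univ_iff_differentiable.2 hGdiff
  have hopen : IsOpenMap G := by
    rcases han.is_constant_or_isOpen isPreconnected_univ with ⟨w, hw⟩ | hop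
    · exact absurd (hinj ((hw 0 trivial).trans (hw 1 trivial).symm)) zero_ne_one
    · exact fun s hs => hop s (subset_univ s) hs
  -- G is proper
  have htend : Tendsto G (cobounded ℂ) (cobounded ℂ) := by
    rw [cobounded_eq_cocompact]
    exact (Homeomorph.map_cocompact (Equiv.toHomeomorphOfContinuousOpen
      (Equiv.ofBijective G ⟨hinj, hsurj⟩) hGdiff.continuous hopen)).le
  set h : ℂ → ℂ := fun w => (G w⁻¹ - G 0)⁻¹ with hh
  have hne : ∀ w : ℂ, w ≠ 0 → G w⁻¹ - G 0 ≠ 0 := by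
    intro w hw
    refine sub_ne_zero.2 fun e => inv_ne_zero hw (hinj e)
  have h0 : h 0 = 0 := by simp [hh]
  have hd : ∀ᶠ w in 𝓝[≠] (0 : ℂ), DifferentiableAt ℂ h w := by
    filter_upwards [eventually_mem_nhdsWithin] with w hw
    have hw' : w ≠ 0 := hw
    exact (((hGdiff _).comp w (differentiableAt_inv hw')).sub_const _).inv (hne w hw')
  have hcont : ContinuousAt h 0 := by
    rw [ContinuousAt, h0]
    nth_rewrite 1 [← nhdsNE_sup_pure (0 : ℂ)]
    refine tendsto_sup.2 ⟨?_, ?_⟩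
    · have t1 : Tendsto (fun w : ℂ => G w⁻¹) (𝓝[≠] 0) (cobounded ℂ) :=
        htend.comp tendsto_inv₀_nhdsNE_zero
      have t2 : Tendsto (fun w : ℂ => G w⁻¹ - G 0) (𝓝[≠] 0) (cobounded ℂ) := by
        rw [← tendsto_norm_atTop_iff_cobounded] at t1 ⊢
        refine tendsto_atTop_mono (fun w => ?_) (tendsto_atTop_add_const_right _ (-‖G 0‖) t1)
        have := norm_sub_norm_le (G w⁻¹) (G 0)
        linarith
      exact tendsto_inv₀_cobounded.comp t2
    · have := tendsto_pure_nhds h 0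
      rwa [h0] at this
  have hA : AnalyticAt ℂ h 0 :=
    Complex.analyticAt_of_differentiable_on_punctured_nhds_of_continuousAt hd hcont
  have hord : analyticOrderAt h 0 ≠ ⊤ := by
    intro htop
    rw [analyticOrderAt_eq_top] at htop
    have hev := htop
    obtain ⟨w, hw1, hw2⟩ :=
      ((hev.filter_mono nhdsWithin_le_nhds).and
        (eventually_mem_nhdsWithin (s := {(0 : ℂ)}ᶜ))).exists
    exact hne w hw2 (inv_eq_zero.1 hw1)
  obtain ⟨n, hn⟩ := WithTop.ne_top_iff_exists.1 hord
  obtain ⟨u, hu_an, hu0, hu_eq⟩ := (hA.analyticOrderAt_eq_natCast (n := n)).1 hn.symm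
  have hε : (0 : ℝ) < ‖u 0‖ / 2 := by
    have := norm_pos_iff.2 hu0; linarith
  have hub : ∀ᶠ w in 𝓝 (0 : ℂ), ‖u 0‖ / 2 ≤ ‖u w‖ := by
    have h2 : Tendsto (fun w => ‖u w‖) (𝓝 (0:ℂ)) (𝓝 ‖u 0‖) := hu_an.continuousAt.norm
    exact h2.eventually_const_le (by linarith)
  have hkey : ∀ᶠ w in 𝓝[≠] (0 : ℂ),
      ‖G w⁻¹ - G 0‖ ≤ (‖u 0‖ / 2)⁻¹ * ‖w⁻¹‖ ^ n := by
    filter_upwards [hu_eq.filter_mono nhdsWithin_le_nhds, hub.filter_mono nhdsWithin_le_nhds,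
      eventually_mem_nhdsWithin] with w hw1 hw2 hw3
    have hwne : w ≠ 0 := hw3
    have e1 : G w⁻¹ - G 0 = (h w)⁻¹ := by rw [hh]; simp
    rw [e1, hw1]
    simp only [sub_zero, smul_eq_mul]
    have hwn : (0 : ℝ) < ‖w‖ ^ n := pow_pos (norm_pos_iff.2 hwne) n
    rw [norm_inv, norm_mul, norm_pow, norm_inv, inv_pow, ← mul_inv]
    refine inv_anti₀ (by positivity) ?_
    rw [mul_comm]
    exact mul_le_mul_of_nonneg_left hw2 hwn.le
  have hcb : ∀ᶠ z in cobounded ℂ, ‖G z - G 0‖ ≤ (‖u 0‖ / 2)⁻¹ * ‖z‖ ^ n := by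
    filter_upwards [tendsto_inv₀_cobounded'.eventually hkey,
      tendsto_norm_cobounded_atTop.eventually_ge_atTop 1] with z hz hz1
    have hzne : z ≠ 0 := by intro h; rw [h] at hz1; simp at hz1; linarith
    rwa [inv_inv] at hz
  have hO1 : (fun z => G z - G 0) =O[cobounded ℂ] fun z => z ^ n := by
    rw [isBigO_iff]
    refine ⟨(‖u 0‖ / 2)⁻¹, ?_⟩
    filter_upwards [hcb] with z hz
    rwa [norm_pow]
  have hO : G =O[cobounded ℂ] fun z => z ^ n := by
    have := hO1.add (const_isBigO_pow_aux (G 0) n)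
    refine this.congr_left fun z => by ring
  exact poly_of_isBigO_aux n G hGdiff hO

/-- If `g` is holomorphic on the punctured plane `ℂ∗` and `z ↦ exp(g(z))·z` is a bijection of
`ℂ∗` onto itself, then `g` is constant on `ℂ∗`. -/
theorem constant_of_exp_mul_bijective
    (g : ℂ → ℂ) (hg : DifferentiableOn ℂ g {(0 : ℂ)}ᶜ)
    (hbij : Set.BijOn (fun z => Complex.exp (g z) * z) {(0 : ℂ)}ᶜ {(0 : ℂ)}ᶜ) :
    ∀ z ∈ ({(0 : ℂ)}ᶜ : Set ℂ), ∀ w ∈ ({(0 : ℂ)}ᶜ : Set ℂ), g z = g w := by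
  have hexpmem : ∀ z : ℂ, Complex.exp z ∈ ({(0 : ℂ)}ᶜ : Set ℂ) := fun z => by
    simp [Complex.exp_ne_zero]
  set c : ℂ := 2 * Real.pi * I with hc
  have hcne : c ≠ 0 := by
    simp [hc, Real.pi_ne_zero, I_ne_zero]
  set G : ℂ → ℂ := fun z => g (Complex.exp z) + z with hG
  have hGdiff : Differentiable ℂ G := by
    intro z
    have h1 : DifferentiableAt ℂ g (Complex.exp z) :=
      hg.differentiableAt (isOpen_compl_singleton.mem_nhds (hexpmem z))
    exact (h1.comp z (Complex.differentiable_exp z)).add differentiableAt_id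
  have hexpG : ∀ z, Complex.exp (G z) = Complex.exp (g (Complex.exp z)) * Complex.exp z := by
    intro z; rw [hG]; simp [Complex.exp_add]
  have hinj : Function.Injective G := by
    intro a b hab
    have e1 : Complex.exp (g (Complex.exp a)) * Complex.exp a
        = Complex.exp (g (Complex.exp b)) * Complex.exp b := by
      rw [← hexpG, ← hexpG, hab]
    have e2 : Complex.exp a = Complex.exp b := hbij.injOn (hexpmem a) (hexpmem b) e1
    have e3 : g (Complex.exp a) = g (Complex.exp b) := by rw [e2]
    have := hab
    rw [hG] at this
    simp only [e3] at this
    exact add_left_cancel this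
  have hper : ∀ (z m : ℂ), Complex.exp m = 1 → G (z + m) = G z + m := by
    intro z m hm
    rw [hG]
    simp only
    rw [Complex.exp_add, hm, mul_one]
    ring
  have hsurj : Function.Surjective G := by
    intro w
    obtain ⟨u, hu, hfu⟩ := hbij.surjOn (hexpmem w)
    have hu' : u ≠ 0 := hu
    have hlog : Complex.exp (Complex.log u) = u := Complex.exp_log hu'
    have e1 : Complex.exp (G (Complex.log u)) = Complex.exp w := by
      rw [hexpG, hlog]
      exact hfu
    obtain ⟨k, hk⟩ := Complex.exp_eq_exp_iff_exists_int.1 e1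
    refine ⟨Complex.log u - k * c, ?_⟩
    have hek : Complex.exp (-(k * c)) = 1 := by
      have : (-(k * c)) = ((-k : ℤ) : ℂ) * (2 * Real.pi * I) := by push_cast [hc]; ring
      rw [this]
      exact Complex.exp_int_mul_two_pi_mul_I (-k)
    have := hper (Complex.log u - k * c) (k * c) (by
      have : ((k : ℂ) * c) = ((k : ℤ) : ℂ) * (2 * Real.pi * I) := by push_cast [hc]; ring
      rw [this]; exact Complex.exp_int_mul_two_pi_mul_I k)
    rw [sub_add_cancel] at this
    rw [this] at hk
    have : G (Complex.log u - k * c) = w + k * c - k * c := by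
      rw [← hk]; ring
    simpa using this
  obtain ⟨p, hp⟩ := poly_of_bijective_aux G hGdiff hinj hsurj
  -- the periodicity forces G z = z + G 0
  set q : Polynomial ℂ := p - (Polynomial.X + Polynomial.C (G 0)) with hqdef
  have hq : ∀ z, q.eval z = G z - (z + G 0) := by
    intro z
    simp [hqdef, ← hp]
  have hexpc : Complex.exp c = 1 := by
    have : c = ((1 : ℤ) : ℂ) * (2 * Real.pi * I) := by push_cast [hc]; ring
    rw [this]; exact Complex.exp_int_mul_two_pi_mul_I 1
  have hDper : ∀ z, q.eval (z + c) = q.eval z := by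
    intro z
    rw [hq, hq, hper z c hexpc]
    ring
  have hroot : ∀ k : ℕ, q.eval ((k : ℂ) * c) = 0 := by
    intro k
    induction k with
    | zero => simp [hq]
    | succ k ih =>
      have e : ((k + 1 : ℕ) : ℂ) * c = (k : ℂ) * c + c := by push_cast; ring
      rw [e, hDper, ih]
  have hq0 : q = 0 := by
    refine Polynomial.eq_zero_of_infinite_isRoot q ?_
    refine Set.infinite_of_injective_forall_mem (f := fun k : ℕ => (k : ℂ) * c) ?_ ?_
    · intro a b hab
      have := mul_right_cancel₀ hcne hab
      exact_mod_cast this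
    · intro k
      exact hroot k
  have hGaff : ∀ z, G z = z + G 0 := by
    intro z
    have := hq z
    rw [hq0] at this
    simp at this
    linear_combination -this
  have key : ∀ x : ℂ, x ≠ 0 → g x = G 0 := by
    intro x hx
    have hlx : Complex.exp (Complex.log x) = x := Complex.exp_log hx
    have := hGaff (Complex.log x)
    rw [hG] at this
    simp only [hlx] at this
    linear_combination this
  intro z hz w hw
  rw [key z hz, key w hw]
end

section
/- Let f : ℂ × ℂ∗ → ℂ be holomorphic. The map Φ(x, y) := (x − f(x, y), y) is an automorphism of ℂ × ℂ∗ (a bijective holomorphic self-map with holomorphic inverse) if and only if there exist a holomorphic nowhere-vanishing function c : ℂ∗ → ℂ∗ and a holomorphic function γ : ℂ∗ → ℂ such that f(x, y) = x·(1 − c(y)) − γ(y) for all (x, y) ∈ ℂ × ℂ∗. -/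
open Set

open Filter Metric Bornology Polynomial
open scoped Topology

noncomputable section

/-- The domain `ℂ × ℂ∗`. -/
def PuncturedProd : Set (ℂ × ℂ) := Set.univ ×ˢ {(0 : ℂ)}ᶜ

/-- A biholomorphism of ℂ is affine. -/
lemma entire_bijective_affine (h k : ℂ → ℂ) (hh : Differentiable ℂ h)
    (hk : Differentiable ℂ k) (hkh : ∀ x, k (h x) = x) (hhk : ∀ x, h (k x) = x) :
    ∀ x, h x = h 0 + x * (h 1 - h 0) := by
  -- properness
  have hproper : Tendsto h (cocompact ℂ) (cocompact ℂ) := by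
    rw [hasBasis_cocompact.tendsto_iff hasBasis_cocompact]
    intro K hK
    refine ⟨k '' K, hK.image hk.continuous, fun x hx => ?_⟩
    simp only [mem_compl_iff, mem_image] at hx ⊢
    intro hxK
    exact hx ⟨h x, hxK, hkh x⟩
  have htop : Tendsto (fun z => ‖h z‖) (cocompact ℂ) atTop :=
    tendsto_norm_cocompact_atTop.comp hproper
  -- radius beyond which ‖h z‖ ≥ 1
  obtain ⟨K, hKc, hKs⟩ := hasBasis_cocompact.mem_iff.1 (htop.eventually (eventually_ge_atTop 1))
  obtain ⟨R, hR⟩ := hKc.isBounded.subset_closedBall 0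
  set R₀ : ℝ := max R 1 + 1 with hR₀def
  have hR₀1 : (1 : ℝ) < R₀ := by
    have : (1:ℝ) ≤ max R 1 := le_max_right _ _
    linarith
  have hbig : ∀ z : ℂ, R₀ ≤ ‖z‖ → 1 ≤ ‖h z‖ := by
    intro z hz
    apply hKs
    simp only [mem_compl_iff]
    intro hzK
    have := hR hzK
    simp only [mem_closedBall, dist_zero_right] at this
    have h1 : R ≤ max R 1 := le_max_left _ _
    linarith
  have hne : ∀ z : ℂ, R₀ ≤ ‖z‖ → h z ≠ 0 := by
    intro z hz h0
    have := hbig z hz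
    rw [h0, norm_zero] at this; linarith
  -- the auxiliary function near 0
  set H : ℂ → ℂ := fun z => if z = 0 then 0 else (h z⁻¹)⁻¹ with hHdef
  have hHeq : ∀ z : ℂ, z ≠ 0 → H z = (h z⁻¹)⁻¹ := fun z hz => if_neg hz
  have hHsmall : ∀ z : ℂ, z ≠ 0 → ‖z‖ ≤ R₀⁻¹ → H z ≠ 0 := by
    intro z hz hzn h0
    rw [hHeq z hz, inv_eq_zero] at h0
    refine hne z⁻¹ ?_ h0
    rw [norm_inv]
    exact (le_inv_comm₀ (by positivity) (norm_pos_iff.2 hz)).2 hzn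
  have hmem : {z : ℂ | z ≠ 0 ∧ ‖z‖ < R₀⁻¹} ∈ 𝓝[≠] (0:ℂ) := by
    apply inter_mem_nhdsWithin
    have : ball (0:ℂ) R₀⁻¹ ∈ 𝓝 (0:ℂ) := ball_mem_nhds _ (by positivity)
    refine Filter.mem_of_superset this fun z hz => ?_
    exact (by simpa [Complex.dist_eq] using hz : ‖z‖ < R₀⁻¹)
  have hHdiff : ∀ᶠ z in 𝓝[≠] (0:ℂ), DifferentiableAt ℂ H z := by
    filter_upwards [hmem] with z hz
    have hz0 : z ≠ 0 := hz.1
    have hopen : IsOpen {w : ℂ | w ≠ 0 ∧ ‖w‖ < R₀⁻¹} :=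
      IsOpen.inter isOpen_ne (isOpen_lt continuous_norm continuous_const)
    have hEV : H =ᶠ[𝓝 z] fun w => (h w⁻¹)⁻¹ := by
      filter_upwards [hopen.mem_nhds hz] with w hw
      exact hHeq w hw.1
    have hda : DifferentiableAt ℂ (fun w => (h w⁻¹)⁻¹) z := by
      have hinn : DifferentiableAt ℂ (fun w : ℂ => h w⁻¹) z :=
        (hh.differentiableAt).comp z (differentiableAt_inv hz0)
      apply hinn.inv
      apply hne
      rw [norm_inv]
      exact (le_inv_comm₀ (by positivity) (norm_pos_iff.2 hz0)).2 (le_of_lt hz.2)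
    exact hda.congr_of_eventuallyEq hEV
  have hHcont : ContinuousAt H 0 := by
    have h1 : Tendsto H (𝓝[≠] (0:ℂ)) (𝓝 (0:ℂ)) := by
      have t1 : Tendsto (fun z : ℂ => z⁻¹) (𝓝[≠] (0:ℂ)) (cobounded ℂ) :=
        tendsto_inv₀_nhdsNE_zero
      have t2 : Tendsto h (cobounded ℂ) (cobounded ℂ) := by
        rw [cobounded_eq_cocompact]; exact hproper
      have t3 : Tendsto (fun w : ℂ => w⁻¹) (cobounded ℂ) (𝓝 0) := tendsto_inv₀_cobounded
      have h4 := t3.comp (t2.comp t1)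
      apply h4.congr'
      filter_upwards [self_mem_nhdsWithin] with z hz
      exact (hHeq z hz).symm
    have hH0 : H 0 = 0 := if_pos rfl
    have h2 : Tendsto H (pure (0:ℂ)) (𝓝 (0:ℂ)) := by
      simpa [hH0] using tendsto_pure_nhds H (0:ℂ)
    have h3 : Tendsto H (𝓝[≠] (0:ℂ) ⊔ pure 0) (𝓝 (0:ℂ)) := tendsto_sup.2 ⟨h1, h2⟩
    rw [nhdsNE_sup_pure] at h3
    rw [ContinuousAt, hH0]
    exact h3
  have hHan : AnalyticAt ℂ H 0 :=
    Complex.analyticAt_of_differentiable_on_punctured_nhds_of_continuousAt hHdiff hHcont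
  -- not eventually zero
  have hHnez : ¬∀ᶠ z in 𝓝 (0:ℂ), H z = 0 := by
    intro hev
    obtain ⟨z, hz0, hz⟩ :=
      ((hev.filter_mono nhdsWithin_le_nhds).and (eventually_of_mem hmem fun z hz => hz)).exists
    exact hHsmall z hz.1 (le_of_lt hz.2) hz0
  obtain ⟨n, g, hgan, hg0, hgeq⟩ := hHan.exists_eventuallyEq_pow_smul_nonzero_iff.2 hHnez
  -- lower bound on ‖g‖ near 0
  have hgc : ∀ᶠ z in 𝓝 (0:ℂ), ‖g 0‖ / 2 < ‖g z‖ := by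
    have hpos : ‖g 0‖ / 2 < ‖g 0‖ := by
      have := norm_pos_iff.2 hg0; linarith
    exact hgan.continuousAt.norm.eventually_const_lt hpos
  -- growth bound
  obtain ⟨δ, hδpos, hδ⟩ := Metric.eventually_nhds_iff.1 (hgeq.and hgc)
  set R₁ : ℝ := max R₀ (2 / δ) with hR₁def
  have hR₁1 : (1:ℝ) < R₁ := lt_of_lt_of_le hR₀1 (le_max_left _ _)
  have hg0pos : 0 < ‖g 0‖ := norm_pos_iff.2 hg0
  set C : ℝ := 2 / ‖g 0‖ with hCdef
  have hCpos : 0 < C := by positivity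
  have hgrowth : ∀ w : ℂ, R₁ ≤ ‖w‖ → ‖h w‖ ≤ C * ‖w‖ ^ n := by
    intro w hw
    have hwpos : (0:ℝ) < ‖w‖ := lt_of_lt_of_le (by linarith) hw
    have hw0 : w ≠ 0 := norm_pos_iff.1 hwpos
    have hzδ : dist w⁻¹ (0:ℂ) < δ := by
      rw [dist_zero_right, norm_inv]
      rw [inv_lt_iff_one_lt_mul₀ hwpos]
      have h2δ : 2 / δ ≤ ‖w‖ := le_trans (le_max_right _ _) hw
      nlinarith [mul_le_mul_of_nonneg_right h2δ (le_of_lt hδpos),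
        div_mul_cancel₀ (2:ℝ) (ne_of_gt hδpos)]
    obtain ⟨hHz, hgz⟩ := hδ hzδ
    rw [hHeq w⁻¹ (inv_ne_zero hw0), inv_inv] at hHz
    have hnorm : ‖h w‖⁻¹ = ‖w‖⁻¹ ^ n * ‖g w⁻¹‖ := by
      rw [← norm_inv, hHz]
      simp [norm_smul, norm_inv]
    have hhw : h w ≠ 0 := hne w (le_trans (le_max_left _ _) hw)
    have hhwpos : (0:ℝ) < ‖h w‖ := norm_pos_iff.2 hhw
    have hlb : ‖g 0‖ / 2 * ‖w‖⁻¹ ^ n ≤ ‖h w‖⁻¹ := by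
      rw [hnorm]
      have hk1 : ‖g 0‖ / 2 ≤ ‖g w⁻¹‖ := le_of_lt hgz
      have hwn : (0:ℝ) ≤ ‖w‖⁻¹ ^ n := by positivity
      nlinarith
    have hpostot : (0:ℝ) < ‖g 0‖ / 2 * ‖w‖⁻¹ ^ n := by positivity
    have h2 : ‖h w‖ ≤ (‖g 0‖ / 2 * ‖w‖⁻¹ ^ n)⁻¹ := (le_inv_comm₀ hpostot hhwpos).1 hlb
    have h3 : (‖g 0‖ / 2 * ‖w‖⁻¹ ^ n)⁻¹ = C * ‖w‖ ^ n := by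
      rw [hCdef]
      rw [mul_inv, inv_pow, inv_inv, inv_div]
    linarith
  -- the iterated dslope sequence
  set d : ℕ → ℂ → ℂ := fun i => Nat.rec h (fun _ ih => dslope ih 0) i with hddef
  have hd0 : d 0 = h := rfl
  have hdsucc : ∀ i, d (i + 1) = dslope (d i) 0 := fun i => rfl
  have hddiff : ∀ i, Differentiable ℂ (d i) := by
    intro i
    induction i with
    | zero => exact hh
    | succ i ih =>
      rw [hdsucc i, ← differentiableOn_univ]
      rw [Complex.differentiableOn_dslope univ_mem]
      exact ih.differentiableOn
  -- telescoping
  have htel : ∀ m : ℕ, ∀ z : ℂ, h z = (∑ i ∈ Finset.range m, d i 0 * z ^ i) + z ^ m * d m z := by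
    intro m
    induction m with
    | zero => intro z; simp [hd0]
    | succ m ih =>
      intro z
      have hsub : d m z = d m 0 + z * d (m + 1) z := by
        have := sub_smul_dslope (d m) 0 z
        rw [sub_zero, smul_eq_mul] at this
        rw [hdsucc m]
        linear_combination -this
      rw [ih z, hsub, Finset.sum_range_succ]
      ring
  -- bound on the iterates
  have hbnd : ∀ i : ℕ, i ≤ n → ∃ Ci : ℝ, 0 < Ci ∧
      ∀ w : ℂ, R₁ ≤ ‖w‖ → ‖d i w‖ * ‖w‖ ^ i ≤ Ci * ‖w‖ ^ n := by
    intro i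
    induction i with
    | zero =>
      intro _
      exact ⟨C, hCpos, fun w hw => by simpa [hd0] using hgrowth w hw⟩
    | succ i ih =>
      intro hin
      obtain ⟨Ci, hCi, hCib⟩ := ih (le_trans (Nat.le_succ i) hin)
      refine ⟨Ci + ‖d i 0‖, by linarith [norm_nonneg (d i 0)], fun w hw => ?_⟩
      have hwpos : (0:ℝ) < ‖w‖ := lt_of_lt_of_le (by linarith) hw
      have hw1 : (1:ℝ) ≤ ‖w‖ := le_trans (le_of_lt hR₁1) hw
      have hw0 : w ≠ 0 := norm_pos_iff.1 hwpos
      have hdn : ‖d (i+1) w‖ = ‖w‖⁻¹ * ‖d i w - d i 0‖ := by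
        rw [hdsucc i, dslope_of_ne _ hw0, slope_def_field]
        rw [div_eq_inv_mul, sub_zero, norm_mul, norm_inv]
      have hin' : ‖w‖ ^ i ≤ ‖w‖ ^ n := pow_le_pow_right₀ hw1 (le_trans (Nat.le_succ i) hin)
      have hd0b : ‖d i 0‖ * ‖w‖ ^ i ≤ ‖d i 0‖ * ‖w‖ ^ n :=
        mul_le_mul_of_nonneg_left hin' (norm_nonneg _)
      have key : ‖d (i+1) w‖ * ‖w‖ ^ (i+1) = ‖d i w - d i 0‖ * ‖w‖ ^ i := by
        rw [hdn, pow_succ,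
          show ‖w‖⁻¹ * ‖d i w - d i 0‖ * (‖w‖ ^ i * ‖w‖) =
            (‖w‖⁻¹ * ‖w‖) * (‖d i w - d i 0‖ * ‖w‖ ^ i) from by ring,
          inv_mul_cancel₀ (ne_of_gt hwpos), one_mul]
      rw [key]
      calc ‖d i w - d i 0‖ * ‖w‖ ^ i
          ≤ (‖d i w‖ + ‖d i 0‖) * ‖w‖ ^ i := by
            apply mul_le_mul_of_nonneg_right (norm_sub_le _ _) (by positivity)
        _ = ‖d i w‖ * ‖w‖ ^ i + ‖d i 0‖ * ‖w‖ ^ i := by ring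
        _ ≤ Ci * ‖w‖ ^ n + ‖d i 0‖ * ‖w‖ ^ n := add_le_add (hCib w hw) hd0b
        _ = (Ci + ‖d i 0‖) * ‖w‖ ^ n := by ring
  -- d n is a bounded entire function, hence constant
  obtain ⟨Cn, hCn, hCnb⟩ := hbnd n le_rfl
  have hdnconst : ∀ z : ℂ, d n z = d n 0 := by
    have hbd : IsBounded (range (d n)) := by
      obtain ⟨M, hM⟩ := (isCompact_closedBall (0:ℂ) R₁).exists_bound_of_continuousOn
        ((hddiff n).continuous.continuousOn)
      rw [isBounded_iff_forall_norm_le]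
      refine ⟨max M Cn, ?_⟩
      rintro _ ⟨w, rfl⟩
      rcases le_or_gt ‖w‖ R₁ with hw | hw
      · exact le_trans (hM w (by simpa [Complex.dist_eq] using hw)) (le_max_left _ _)
      · have := hCnb w (le_of_lt hw)
        have hwpos : (0:ℝ) < ‖w‖ ^ n := pow_pos (lt_trans (by linarith) hw) n
        have : ‖d n w‖ ≤ Cn := by
          have h3 := (mul_le_mul_iff_left₀ hwpos).1 this
          exact h3
        exact le_trans this (le_max_right _ _)
    intro z
    exact (hddiff n).apply_eq_apply_of_bounded hbd z 0
  -- h is a polynomial function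
  have hpoly : ∀ z : ℂ, h z = ∑ i ∈ Finset.range (n+1), d i 0 * z ^ i := by
    intro z
    rw [htel n z, hdnconst z, Finset.sum_range_succ]
    ring
  set P : Polynomial ℂ := ∑ i ∈ Finset.range (n+1), Polynomial.C (d i 0) * Polynomial.X ^ i
    with hPdef
  have heval : h = fun z => P.eval z := by
    funext z
    rw [hpoly z, hPdef]
    simp [Polynomial.eval_finset_sum]
  -- deriv h is never zero
  have hderiv_ne : ∀ x : ℂ, deriv h x ≠ 0 := by
    intro x h0
    have h1 : HasDerivAt (fun x => k (h x)) (deriv k (h x) * deriv h x) x :=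
      ((hk (h x)).hasDerivAt).comp x ((hh x).hasDerivAt)
    have h2 : (fun x => k (h x)) = id := funext hkh
    rw [h2] at h1
    have h3 := h1.unique (hasDerivAt_id x)
    rw [h0, mul_zero] at h3
    exact zero_ne_one h3
  -- hence P.derivative has no roots, so it is constant
  have hPd : ∀ x : ℂ, deriv h x = P.derivative.eval x := by
    intro x
    rw [heval]
    exact Polynomial.deriv _
  have hdegle : P.derivative.degree ≤ 0 := by
    by_contra hdeg
    push_neg at hdeg
    obtain ⟨z, hz⟩ := Complex.exists_root hdeg
    exact hderiv_ne z (by rw [hPd z]; exact hz)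
  have hPC : P.derivative = Polynomial.C (P.derivative.coeff 0) :=
    Polynomial.eq_C_of_degree_le_zero hdegle
  set b : ℂ := P.derivative.coeff 0 with hbdef
  have hderiv_const : ∀ x : ℂ, deriv h x = b := by
    intro x
    rw [hPd x, hPC]
    simp
  -- conclude affine
  have haff : ∀ x : ℂ, h x = h 0 + b * x := by
    have hu : Differentiable ℂ (fun z => h z - b * z) :=
      hh.sub ((differentiable_id.const_mul b))
    have hu' : ∀ x : ℂ, deriv (fun z => h z - b * z) x = 0 := by
      intro x
      have h1 : HasDerivAt (fun z => h z - b * z) (deriv h x - b * 1) x :=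
        ((hh x).hasDerivAt).sub ((hasDerivAt_id x).const_mul b)
      rw [h1.deriv, hderiv_const x]
      ring
    intro x
    have := is_const_of_deriv_eq_zero hu hu' x 0
    simp only [mul_zero, sub_zero] at this
    linear_combination this
  intro x
  have h1 := haff 1
  have hx := haff x
  rw [hx, h1]
  ring

lemma mem_PuncturedProd {p : ℂ × ℂ} : p ∈ PuncturedProd ↔ p.2 ≠ 0 := by
  simp [PuncturedProd, Set.mem_prod]

lemma isOpen_PuncturedProd : IsOpen PuncturedProd :=
  isOpen_univ.prod isOpen_compl_singleton

/-- For a holomorphic `f : ℂ × ℂ∗ → ℂ`, the map `(x, y) ↦ (x − f(x, y), y)` is an automorphism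
of `ℂ × ℂ∗` if and only if `f(x, y) = x·(1 − c(y)) − γ(y)` for some holomorphic
nowhere-vanishing `c : ℂ∗ → ℂ∗` and holomorphic `γ : ℂ∗ → ℂ`. -/
theorem shear_automorphism_characterization
    (f : ℂ × ℂ → ℂ) (hf : DifferentiableOn ℂ f PuncturedProd) :
    IsAutomorphismOn PuncturedProd (fun p => (p.1 - f p, p.2)) ↔
    ∃ c γ : ℂ → ℂ, DifferentiableOn ℂ c {(0 : ℂ)}ᶜ ∧ (∀ y : ℂ, y ≠ 0 → c y ≠ 0) ∧
      DifferentiableOn ℂ γ {(0 : ℂ)}ᶜ ∧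
      ∀ x y : ℂ, y ≠ 0 → f (x, y) = x * (1 - c y) - γ y := by
  have hfAt : ∀ p : ℂ × ℂ, p.2 ≠ 0 → DifferentiableAt ℂ f p := fun p hp =>
    hf.differentiableAt (isOpen_PuncturedProd.mem_nhds (mem_PuncturedProd.2 hp))
  have hslice : ∀ a : ℂ, DifferentiableOn ℂ (fun y => f (a, y)) {(0 : ℂ)}ᶜ := by
    intro a y hy
    have h1 : DifferentiableAt ℂ (fun y : ℂ => (a, y)) y :=
      (differentiable_const a).differentiableAt.prodMk differentiable_id.differentiableAt
    exact ((hfAt (a, y) hy).comp y h1).differentiableWithinAt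
  constructor
  · rintro ⟨hΦd, hΦm, g, hgd, hgm, hgl, hgr⟩
    -- for each y ≠ 0, the slice maps are mutually inverse entire functions
    have main : ∀ y : ℂ, y ≠ 0 → (∀ x : ℂ,
        x - f (x, y) = (0 - f (0, y)) + x * ((1 - f (1, y)) - (0 - f (0, y)))) ∧
        (1 - f (1, y)) - (0 - f (0, y)) ≠ 0 := by
      intro y hy
      set hy' : ℂ → ℂ := fun x => x - f (x, y) with hhy'
      set ky : ℂ → ℂ := fun x => (g (x, y)).1 with hky
      have hmem : ∀ x : ℂ, (x, y) ∈ PuncturedProd := fun x => mem_PuncturedProd.2 hy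
      have hemb : ∀ x : ℂ, DifferentiableAt ℂ (fun x : ℂ => (x, y)) x := fun x =>
        differentiable_id.differentiableAt.prodMk (differentiable_const y).differentiableAt
      have hhd : Differentiable ℂ hy' := fun x =>
        differentiable_id.differentiableAt.sub (((hfAt (x, y) hy)).comp x (hemb x))
      have hkd : Differentiable ℂ ky := by
        intro x
        have h1 : DifferentiableAt ℂ (fun x : ℂ => g (x, y)) x :=
          (hgd.differentiableAt (isOpen_PuncturedProd.mem_nhds (hmem x))).comp x (hemb x)
        exact h1.fst
      have hgsnd : ∀ x : ℂ, (g (x, y)).2 = y := by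
        intro x
        have := hgr (x, y) (hmem x)
        exact congrArg Prod.snd this
      have hg_eq : ∀ x : ℂ, g (x, y) = (ky x, y) := fun x =>
        Prod.ext rfl (hgsnd x)
      have hkh : ∀ x : ℂ, ky (hy' x) = x := by
        intro x
        have := hgl (x, y) (hmem x)
        simpa [hky, hhy'] using congrArg Prod.fst this
      have hhk : ∀ x : ℂ, hy' (ky x) = x := by
        intro x
        have h1 := hgr (x, y) (hmem x)
        have h2 := congrArg Prod.fst h1
        simp only at h2
        rw [hg_eq x] at h2
        simpa [hhy'] using h2
      have haff := entire_bijective_affine hy' ky hhd hkd hkh hhk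
      constructor
      · intro x
        have := haff x
        simpa [hhy'] using this
      · intro h0
        have h1 : hy' 1 = hy' 0 := by
          simp only [hhy']
          linear_combination h0
        have := congrArg ky h1
        rw [hkh 1, hkh 0] at this
        exact one_ne_zero this
    refine ⟨fun y => 1 - f (1, y) + f (0, y), fun y => -f (0, y), ?_, ?_, ?_, ?_⟩
    · exact ((differentiableOn_const 1).sub (hslice 1)).add (hslice 0)
    · intro y hy
      have := (main y hy).2
      intro h0
      apply this
      linear_combination h0
    · exact (hslice 0).neg
    · intro x y hy
      have := (main y hy).1 x
      linear_combination -this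
  · rintro ⟨c, γ, hc, hcne, hγ, hfe⟩
    have hsndne : ∀ p : ℂ × ℂ, p ∈ PuncturedProd → p.2 ∈ ({(0:ℂ)}ᶜ : Set ℂ) := fun p hp =>
      mem_PuncturedProd.1 hp
    have hcD : DifferentiableOn ℂ (fun p : ℂ × ℂ => c p.2) PuncturedProd :=
      hc.comp (differentiable_snd.differentiableOn) hsndne
    have hγD : DifferentiableOn ℂ (fun p : ℂ × ℂ => γ p.2) PuncturedProd :=
      hγ.comp (differentiable_snd.differentiableOn) hsndne
    refine ⟨?_, ?_, fun p => ((p.1 - γ p.2) / c p.2, p.2), ?_, ?_, ?_, ?_⟩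
    · exact ((differentiable_fst.differentiableOn).sub hf).prodMk
        (differentiable_snd.differentiableOn)
    · intro p hp
      exact mem_PuncturedProd.2 (mem_PuncturedProd.1 hp)
    · refine DifferentiableOn.prodMk ?_ (differentiable_snd.differentiableOn)
      have hinv : DifferentiableOn ℂ (fun p : ℂ × ℂ => (c p.2)⁻¹) PuncturedProd :=
        hcD.inv (fun p hp => hcne p.2 (mem_PuncturedProd.1 hp))
      have := ((differentiable_fst.differentiableOn).sub hγD).mul hinv
      refine this.congr fun p _ => ?_
      simp [div_eq_mul_inv]
    · intro p hp
      exact mem_PuncturedProd.2 (mem_PuncturedProd.1 hp)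
    · intro p hp
      have hy : p.2 ≠ 0 := mem_PuncturedProd.1 hp
      have hcy : c p.2 ≠ 0 := hcne p.2 hy
      have hfp : f p = p.1 * (1 - c p.2) - γ p.2 := by
        have := hfe p.1 p.2 hy
        rwa [Prod.mk.eta] at this
      refine Prod.ext ?_ rfl
      simp only [hfp]
      field_simp
      ring
    · intro p hp
      have hy : p.2 ≠ 0 := mem_PuncturedProd.1 hp
      have hcy : c p.2 ≠ 0 := hcne p.2 hy
      have hfq : f ((p.1 - γ p.2) / c p.2, p.2)
          = (p.1 - γ p.2) / c p.2 * (1 - c p.2) - γ p.2 := hfe _ p.2 hy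
      refine Prod.ext ?_ rfl
      simp only [hfq]
      field_simp
      ring
end
end

section
/- Let α, β : ℂ × 𝔾₂ → ℂ be holomorphic, and let E : ℂ → ℂ be the entire function with w·E(w) = exp(w) − 1 and E(0) = 1. Define b : Ω → ℂ by b(x) := −x₁₁ · α(x₁₂, tr x, det x) · E(x₁₂ · α(x₁₂, tr x, det x)) + β(x₁₂, tr x, det x). Then b is holomorphic on Ω and the triangular conjugation T_b : x ↦ t(x) x t(x)⁻¹, where t(x) is the lower-triangular matrix with rows (1, 0) and (b(x), 1), is an automorphism of Ω. -/
open Matrix Set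

attribute [local instance] Matrix.normedAddCommGroup Matrix.normedSpace

noncomputable section

/-- The lower triangular matrix with rows `(1, 0)` and `(b, 1)`. -/
def TriMat (b : ℂ) : M2 := !![1, 0; b, 1]

/-- The symmetrized bidisc `𝔾₂`. -/
def SymBidisc : Set (ℂ × ℂ) :=
  {p | ∃ z w : ℂ, ‖z‖ < 1 ∧ ‖w‖ < 1 ∧ p = (z + w, z * w)}

/- ### Auxiliary lemmas -/

lemma tri_mul (a c : ℂ) : TriMat a * TriMat c = TriMat (a + c) := by
  simp [TriMat, Matrix.mul_fin_two]

lemma tri_inv (c : ℂ) : (TriMat c)⁻¹ = TriMat (-c) := by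
  apply Matrix.inv_eq_right_inv
  rw [tri_mul]; simp [TriMat, Matrix.one_fin_two]

lemma tri_zero : TriMat 0 = 1 := by simp [TriMat, Matrix.one_fin_two]

/-- Conjugation by the triangular matrix, with the inverse spelled out. -/
def conj2 (c : ℂ) (x : M2) : M2 := TriMat c * x * TriMat (-c)

lemma conj2_eq (c : ℂ) (x : M2) : conj2 c x =
    !![x 0 0 - c * x 0 1, x 0 1;
       c * x 0 0 + x 1 0 - c * (c * x 0 1 + x 1 1), c * x 0 1 + x 1 1] := by
  rw [conj2, Matrix.eta_fin_two x]
  simp [TriMat, Matrix.mul_fin_two]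
  ring_nf
  all_goals trivial

lemma conj2_01 (c : ℂ) (x : M2) : conj2 c x 0 1 = x 0 1 := by rw [conj2_eq]; simp

lemma conj2_00 (c : ℂ) (x : M2) : conj2 c x 0 0 = x 0 0 - c * x 0 1 := by
  rw [conj2_eq]; simp

lemma conj2_trace (c : ℂ) (x : M2) : (conj2 c x).trace = x.trace := by
  rw [conj2_eq, Matrix.trace_fin_two, Matrix.trace_fin_two]; simp; ring

lemma conj2_det (c : ℂ) (x : M2) : (conj2 c x).det = x.det := by
  rw [conj2_eq, Matrix.det_fin_two, Matrix.det_fin_two]; simp; ring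

lemma conj2_conj2 (a c : ℂ) (x : M2) : conj2 a (conj2 c x) = conj2 (a + c) x := by
  rw [conj2_eq, conj2_eq, conj2_eq]
  ext i j
  fin_cases i <;> fin_cases j <;> simp <;> ring

lemma conj2_def (c : ℂ) (x : M2) : TriMat c * x * (TriMat c)⁻¹ = conj2 c x := by
  rw [tri_inv]; rfl

lemma conj2_zero (x : M2) : conj2 0 x = x := by
  simp [conj2, tri_zero]

lemma spec_mem_iff (z : ℂ) (x : M2) :
    z ∈ spectrum ℂ x ↔ z ^ 2 - x.trace * z + x.det = 0 := by
  rw [spectrum.mem_iff]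
  rw [Matrix.isUnit_iff_isUnit_det]
  rw [isUnit_iff_ne_zero, not_ne_iff]
  constructor <;> intro h <;> rw [← h] <;>
  · rw [Matrix.eta_fin_two x]
    simp [Matrix.det_fin_two, Matrix.trace_fin_two, Matrix.algebraMap_eq_diagonal]
    ring

lemma conj2_spectrum (c : ℂ) (x : M2) : spectrum ℂ (conj2 c x) = spectrum ℂ x := by
  ext z
  rw [spec_mem_iff, spec_mem_iff, conj2_trace, conj2_det]

lemma conj2_mem {x : M2} (c : ℂ) (hx : x ∈ SpectralBall) : conj2 c x ∈ SpectralBall := by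
  intro z hz
  rw [conj2_spectrum] at hz
  exact hx z hz

lemma ball_symBidisc {x : M2} (hx : x ∈ SpectralBall) : (x.trace, x.det) ∈ SymBidisc := by
  obtain ⟨s, hs⟩ := IsAlgClosed.exists_pow_nat_eq (k := ℂ) (x.trace ^ 2 - 4 * x.det) zero_lt_two
  set z := (x.trace + s) / 2 with hzdef
  set w := (x.trace - s) / 2 with hwdef
  have hsum : z + w = x.trace := by rw [hzdef, hwdef]; ring
  have hprod : z * w = x.det := by
    rw [hzdef, hwdef]
    field_simp
    linear_combination -hs
  have hz : z ∈ spectrum ℂ x := by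
    rw [spec_mem_iff, ← hsum, ← hprod]; ring
  have hw : w ∈ spectrum ℂ x := by
    rw [spec_mem_iff, ← hsum, ← hprod]; ring
  exact ⟨z, w, hx z hz, hx w hw, by rw [hsum, hprod]⟩

lemma diff_entry (i j : Fin 2) : Differentiable ℂ (fun x : M2 => x i j) :=
  (differentiable_pi.mp (differentiable_pi.mp differentiable_id i)) j

lemma diff_trace : Differentiable ℂ (fun x : M2 => x.trace) := by
  have : (fun x : M2 => x.trace) = fun x : M2 => x 0 0 + x 1 1 := by
    funext x; rw [Matrix.trace_fin_two]
  rw [this]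
  exact (diff_entry 0 0).add (diff_entry 1 1)

lemma diff_det : Differentiable ℂ (fun x : M2 => x.det) := by
  have : (fun x : M2 => x.det) = fun x : M2 => x 0 0 * x 1 1 - x 0 1 * x 1 0 := by
    funext x; rw [Matrix.det_fin_two]
  rw [this]
  exact ((diff_entry 0 0).mul (diff_entry 1 1)).sub ((diff_entry 0 1).mul (diff_entry 1 0))

lemma diffOn_mat {s : Set M2} {f00 f01 f10 f11 : M2 → ℂ} (h00 : DifferentiableOn ℂ f00 s)
    (h01 : DifferentiableOn ℂ f01 s) (h10 : DifferentiableOn ℂ f10 s)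
    (h11 : DifferentiableOn ℂ f11 s) :
    DifferentiableOn ℂ (fun x => (!![f00 x, f01 x; f10 x, f11 x] : M2)) s := by
  refine differentiableOn_pi.mpr ?_
  intro i
  rw [differentiableOn_pi]
  intro j
  fin_cases i <;> fin_cases j <;> simp [h00, h01, h10, h11] <;> assumption

/-- Given holomorphic `α, β : ℂ × 𝔾₂ → ℂ` and the entire function `E` with
`w E(w) = exp(w) − 1`, `E(0) = 1`, the function
`b(x) = −x₁₁ α(x₁₂, tr x, det x) E(x₁₂ α(x₁₂, tr x, det x)) + β(x₁₂, tr x, det x)`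
is holomorphic on the spectral ball and the triangular conjugation `T_b` is an automorphism
of the spectral ball. -/
theorem triangular_conjugation_is_automorphism
    (α β : ℂ × ℂ × ℂ → ℂ)
    (hα : DifferentiableOn ℂ α (Set.univ ×ˢ SymBidisc))
    (hβ : DifferentiableOn ℂ β (Set.univ ×ˢ SymBidisc))
    (E : ℂ → ℂ) (hE : Differentiable ℂ E)
    (hEeq : ∀ w : ℂ, w * E w = Complex.exp w - 1) (hE0 : E 0 = 1)
    (b : M2 → ℂ)
    (hbdef : ∀ x : M2, b x =
      -(x 0 0) * α (x 0 1, x.trace, x.det) * E (x 0 1 * α (x 0 1, x.trace, x.det))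
        + β (x 0 1, x.trace, x.det)) :
    DifferentiableOn ℂ b SpectralBall ∧
    IsAutomorphismOn SpectralBall
      (fun x => TriMat (b x) * x * (TriMat (b x))⁻¹) := by
  -- abbreviations
  set p : M2 → ℂ × ℂ × ℂ := fun x => (x 0 1, x.trace, x.det) with hp
  have hpdiff : Differentiable ℂ p :=
    (diff_entry 0 1).prodMk (diff_trace.prodMk diff_det)
  have hpmaps : MapsTo p SpectralBall (Set.univ ×ˢ SymBidisc) := by
    intro x hx
    exact ⟨Set.mem_univ _, ball_symBidisc hx⟩
  have hαc : DifferentiableOn ℂ (fun x => α (p x)) SpectralBall :=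
    hα.comp hpdiff.differentiableOn hpmaps
  have hβc : DifferentiableOn ℂ (fun x => β (p x)) SpectralBall :=
    hβ.comp hpdiff.differentiableOn hpmaps
  have hEc : DifferentiableOn ℂ (fun x => E (x 0 1 * α (p x))) SpectralBall :=
    (hE.differentiableOn (s := Set.univ)).comp
      (((diff_entry 0 1).differentiableOn).mul hαc) (mapsTo_univ _ _)
  have hbdiff : DifferentiableOn ℂ b SpectralBall := by
    have : b = fun x => -(x 0 0) * α (p x) * E (x 0 1 * α (p x)) + β (p x) := by
      funext x; exact hbdef x
    rw [this]
    exact ((((diff_entry 0 0).neg.differentiableOn).mul hαc).mul hEc).add hβc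
  refine ⟨hbdiff, ?_, ?_, ?_⟩
  · -- differentiability of the conjugation
    have heq : (fun x : M2 => TriMat (b x) * x * (TriMat (b x))⁻¹)
        = fun x => !![x 0 0 - b x * x 0 1, x 0 1;
            b x * x 0 0 + x 1 0 - b x * (b x * x 0 1 + x 1 1), b x * x 0 1 + x 1 1] := by
      funext x
      rw [conj2_def, conj2_eq]
    rw [heq]
    have e00 := (diff_entry 0 0).differentiableOn (s := SpectralBall)
    have e01 := (diff_entry 0 1).differentiableOn (s := SpectralBall)
    have e10 := (diff_entry 1 0).differentiableOn (s := SpectralBall)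
    have e11 := (diff_entry 1 1).differentiableOn (s := SpectralBall)
    exact diffOn_mat (e00.sub (hbdiff.mul e01)) e01
      (((hbdiff.mul e00).add e10).sub (hbdiff.mul ((hbdiff.mul e01).add e11)))
      ((hbdiff.mul e01).add e11)
  · -- maps to
    intro x hx
    simp only [conj2_def]
    exact conj2_mem _ hx
  · -- inverse
    set b' : M2 → ℂ := fun y =>
      Complex.exp (-(y 0 1 * α (p y))) * (y 0 0 * α (p y) * E (y 0 1 * α (p y)) - β (p y))
      with hb'
    refine ⟨fun y => TriMat (b' y) * y * (TriMat (b' y))⁻¹, ?_, ?_, ?_, ?_⟩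
    · -- differentiability of g
      have hb'diff : DifferentiableOn ℂ b' SpectralBall := by
        apply DifferentiableOn.mul
        · exact (Complex.differentiable_exp.differentiableOn (s := Set.univ)).comp
            ((((diff_entry 0 1).differentiableOn).mul hαc).neg) (mapsTo_univ _ _)
        · exact ((((diff_entry 0 0).differentiableOn).mul hαc).mul hEc).sub hβc
      have heq : (fun y : M2 => TriMat (b' y) * y * (TriMat (b' y))⁻¹)
          = fun y => !![y 0 0 - b' y * y 0 1, y 0 1;
              b' y * y 0 0 + y 1 0 - b' y * (b' y * y 0 1 + y 1 1), b' y * y 0 1 + y 1 1] := by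
        funext y
        rw [tri_inv, ← conj2, conj2_eq]
      rw [heq]
      have e00 := (diff_entry 0 0).differentiableOn (s := SpectralBall)
      have e01 := (diff_entry 0 1).differentiableOn (s := SpectralBall)
      have e10 := (diff_entry 1 0).differentiableOn (s := SpectralBall)
      have e11 := (diff_entry 1 1).differentiableOn (s := SpectralBall)
      exact diffOn_mat (e00.sub (hb'diff.mul e01)) e01
        (((hb'diff.mul e00).add e10).sub (hb'diff.mul ((hb'diff.mul e01).add e11)))
        ((hb'diff.mul e01).add e11)
    · intro y hy
      simp only [conj2_def]
      exact conj2_mem _ hy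
    · -- g ∘ f = id
      intro x _
      simp only [conj2_def]
      have hpfx : p (conj2 (b x) x) = p x := by
        rw [hp]
        simp only [conj2_01, conj2_trace, conj2_det]
      have key : b' (conj2 (b x) x) = -(b x) := by
        simp only [hb']
        simp only [hpfx, conj2_00, conj2_01]
        have hb1 : b x = -(x 0 0) * α (p x) * E (x 0 1 * α (p x)) + β (p x) := hbdef x
        have hexp := hEeq (x 0 1 * α (p x))
        have hexpne := Complex.exp_ne_zero (x 0 1 * α (p x))
        have goal2 : (x 0 0 - b x * x 0 1) * α (p x) * E (x 0 1 * α (p x)) - β (p x)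
            = -(b x) * Complex.exp (x 0 1 * α (p x)) := by
          linear_combination (-(b x)) * hexp + hb1
        rw [Complex.exp_neg, goal2]
        field_simp
      rw [key, conj2_conj2]
      simp [conj2_zero]
    · -- f ∘ g = id
      intro y _
      simp only [conj2_def]
      have hpgy : p (conj2 (b' y) y) = p y := by
        rw [hp]
        simp only [conj2_01, conj2_trace, conj2_det]
      have key : b (conj2 (b' y) y) = -(b' y) := by
        rw [hbdef]
        rw [show ((conj2 (b' y) y) 0 1, (conj2 (b' y) y).trace, (conj2 (b' y) y).det) = p (conj2 (b' y) y) from rfl]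
        simp only [hpgy, conj2_00, conj2_01]
        have hexp := hEeq (y 0 1 * α (p y))
        have hexpne := Complex.exp_ne_zero (y 0 1 * α (p y))
        have hcex : b' y * Complex.exp (y 0 1 * α (p y))
            = y 0 0 * α (p y) * E (y 0 1 * α (p y)) - β (p y) := by
          simp only [hb']
          rw [Complex.exp_neg]
          field_simp
        linear_combination (b' y) * hexp + hcex
      rw [key, conj2_conj2]
      simp [conj2_zero]
end
end

section
/- Let n ≥ 1 and let u : Ω_n → GL_n(ℂ) be a holomorphic map which is conjugate invariant, i.e. u(q⁻¹ x q) = u(x) for every x ∈ Ω_n and every q ∈ GL_n(ℂ) with q⁻¹ x q ∈ Ω_n. Then the conjugation 𝒥_u : x ↦ u(x)⁻¹ · x · u(x) is an automorphism of Ω_n. -/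
open Matrix Set

attribute [local instance] Matrix.normedAddCommGroup Matrix.normedSpace

noncomputable section

section Aux
variable {n : ℕ} {E : Type*} [NormedAddCommGroup E] [NormedSpace ℂ E] {s : Set E} {x : E}

lemma aux_entry {f : E → Matrix (Fin n) (Fin n) ℂ}
    (hf : DifferentiableWithinAt ℂ f s x) (i j : Fin n) :
    DifferentiableWithinAt ℂ (fun y => f y i j) s x :=
  (differentiableWithinAt_pi.mp ((differentiableWithinAt_pi.mp hf) i)) j

lemma aux_of_entries {f : E → Matrix (Fin n) (Fin n) ℂ}
    (hf : ∀ i j, DifferentiableWithinAt ℂ (fun y => f y i j) s x) :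
    DifferentiableWithinAt ℂ f s x := by
  apply differentiableWithinAt_pi.mpr
  intro i
  rw [differentiableWithinAt_pi]
  exact hf i

lemma aux_prod {ι : Type*} (t : Finset ι) (f : ι → E → ℂ)
    (hf : ∀ i ∈ t, DifferentiableWithinAt ℂ (f i) s x) :
    DifferentiableWithinAt ℂ (fun y => ∏ i ∈ t, f i y) s x := by
  classical
  induction t using Finset.induction with
  | empty => simpa using differentiableWithinAt_const 1
  | insert _ _ hi ih =>
    simp only [Finset.prod_insert hi]
    exact (hf _ (Finset.mem_insert_self _ _)).mul
      (ih fun i hit => hf i (Finset.mem_insert_of_mem hit))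

lemma aux_det {f : E → Matrix (Fin n) (Fin n) ℂ}
    (hf : ∀ i j, DifferentiableWithinAt ℂ (fun y => f y i j) s x) :
    DifferentiableWithinAt ℂ (fun y => (f y).det) s x := by
  have h : (fun y => (f y).det) =
      fun y => ∑ σ : Equiv.Perm (Fin n), (Equiv.Perm.sign σ : ℂ) * ∏ i, f y (σ i) i := by
    funext y; rw [Matrix.det_apply']
  rw [h]
  exact DifferentiableWithinAt.fun_sum fun σ _ =>
    ((aux_prod Finset.univ _ fun i _ => hf (σ i) i).const_mul _)

lemma aux_mul {f g : E → Matrix (Fin n) (Fin n) ℂ}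
    (hf : DifferentiableWithinAt ℂ f s x) (hg : DifferentiableWithinAt ℂ g s x) :
    DifferentiableWithinAt ℂ (fun y => f y * g y) s x := by
  apply aux_of_entries
  intro i j
  have h : (fun y => (f y * g y) i j) = fun y => ∑ k, f y i k * g y k j := by
    funext y; simp [Matrix.mul_apply]
  rw [h]
  exact DifferentiableWithinAt.fun_sum fun k _ => (aux_entry hf i k).mul (aux_entry hg k j)

lemma aux_inv {f : E → Matrix (Fin n) (Fin n) ℂ}
    (hf : DifferentiableWithinAt ℂ f s x) (hx : IsUnit (f x)) :
    DifferentiableWithinAt ℂ (fun y => (f y)⁻¹) s x := by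
  classical
  have hdet : DifferentiableWithinAt ℂ (fun y => (f y).det) s x :=
    aux_det fun i j => aux_entry hf i j
  have hdetu : IsUnit (f x).det := (Matrix.isUnit_iff_isUnit_det _).mp hx
  have hinvdet : DifferentiableWithinAt ℂ (fun y => Ring.inverse ((f y).det)) s x :=
    hdet.inverse hdetu
  apply aux_of_entries
  intro i j
  have h : (fun y => (f y)⁻¹ i j) =
      fun y => Ring.inverse ((f y).det) * ((f y).updateRow j (Pi.single i 1)).det := by
    funext y
    rw [Matrix.inv_def, Matrix.smul_apply, smul_eq_mul, Matrix.adjugate_apply]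
  rw [h]
  refine hinvdet.mul (aux_det fun k l => ?_)
  by_cases hk : k = j
  · subst hk
    simp only [Matrix.updateRow_self]
    exact differentiableWithinAt_const _
  · simp only [Matrix.updateRow_ne hk]
    exact aux_entry hf k l

end Aux

/-- The spectral ball of `n × n` complex matrices: those whose spectral radius (the maximum
modulus of the eigenvalues) is less than `1`. -/
def SpectralBallN (n : ℕ) : Set (Matrix (Fin n) (Fin n) ℂ) :=
  {x | ∀ z ∈ spectrum ℂ x, ‖z‖ < 1}

lemma spectral_mem_conj {n : ℕ} {x q : Matrix (Fin n) (Fin n) ℂ} (hq : IsUnit q)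
    (hx : x ∈ SpectralBallN n) : q⁻¹ * x * q ∈ SpectralBallN n := by
  intro z hz
  apply hx
  rwa [show q⁻¹ * x * q = ↑hq.unit⁻¹ * x * ↑hq.unit by
        rw [Matrix.coe_units_inv, IsUnit.unit_spec],
      spectrum.units_conjugate'] at hz

/-- If `u` is a conjugate invariant holomorphic map on the spectral ball with invertible
values, then the conjugation `𝒥_u : x ↦ u(x)⁻¹ x u(x)` is an automorphism of the spectral
ball. -/
theorem conjugation_by_invariant_map_is_automorphism
    (n : ℕ) (hn : 1 ≤ n)
    (u : Matrix (Fin n) (Fin n) ℂ → Matrix (Fin n) (Fin n) ℂ)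
    (hu : DifferentiableOn ℂ u (SpectralBallN n))
    (huinv : ∀ x ∈ SpectralBallN n, IsUnit (u x))
    (hconj : ∀ x ∈ SpectralBallN n, ∀ q : Matrix (Fin n) (Fin n) ℂ, IsUnit q →
      q⁻¹ * x * q ∈ SpectralBallN n → u (q⁻¹ * x * q) = u x) :
    IsAutomorphismOn (SpectralBallN n) (fun x => (u x)⁻¹ * x * u x) := by
  have hmaps : MapsTo (fun x => (u x)⁻¹ * x * u x) (SpectralBallN n) (SpectralBallN n) :=
    fun x hx => spectral_mem_conj (huinv x hx) hx
  have hmaps' : MapsTo (fun x => u x * x * (u x)⁻¹) (SpectralBallN n) (SpectralBallN n) := by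
    intro x hx
    have h := spectral_mem_conj (Matrix.isUnit_nonsing_inv_iff.mpr (huinv x hx)) hx
    rwa [Matrix.nonsing_inv_nonsing_inv _ ((Matrix.isUnit_iff_isUnit_det _).mp (huinv x hx))]
      at h
  have hufix : ∀ x ∈ SpectralBallN n, u ((u x)⁻¹ * x * u x) = u x := fun x hx =>
    hconj x hx (u x) (huinv x hx) (hmaps hx)
  have hufix' : ∀ x ∈ SpectralBallN n, u (u x * x * (u x)⁻¹) = u x := by
    intro x hx
    have hdet := (Matrix.isUnit_iff_isUnit_det _).mp (huinv x hx)
    have := hconj x hx (u x)⁻¹ (Matrix.isUnit_nonsing_inv_iff.mpr (huinv x hx))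
    rw [Matrix.nonsing_inv_nonsing_inv _ hdet] at this
    exact this (hmaps' hx)
  refine ⟨?_, hmaps, fun x => u x * x * (u x)⁻¹, ?_, hmaps', ?_, ?_⟩
  · intro x hx
    exact aux_mul (aux_mul (aux_inv (hu x hx) (huinv x hx)) differentiableWithinAt_id)
      (hu x hx)
  · intro x hx
    exact aux_mul (aux_mul (hu x hx) differentiableWithinAt_id)
      (aux_inv (hu x hx) (huinv x hx))
  · intro x hx
    simp only
    rw [hufix x hx]
    have hdet := (Matrix.isUnit_iff_isUnit_det _).mp (huinv x hx)
    calc u x * ((u x)⁻¹ * x * u x) * (u x)⁻¹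
        = (u x * (u x)⁻¹) * x * (u x * (u x)⁻¹) := by noncomm_ring
      _ = x := by rw [Matrix.mul_nonsing_inv _ hdet]; simp
  · intro x hx
    simp only
    rw [hufix' x hx]
    have hdet := (Matrix.isUnit_iff_isUnit_det _).mp (huinv x hx)
    calc (u x)⁻¹ * (u x * x * (u x)⁻¹) * u x
        = ((u x)⁻¹ * u x) * x * ((u x)⁻¹ * u x) := by noncomm_ring
      _ = x := by rw [Matrix.nonsing_inv_mul _ hdet]; simp
end
end

section
/- Let n ≥ 1, α ∈ ℂ with |α| < 1, and γ ∈ ℂ with |γ| = 1. Then for every x ∈ Ω_n the matrix I − \bar{α}·x is invertible, and the Möbius map m_{α,γ} : x ↦ γ · (x − α·I) · (I − \bar{α}·x)⁻¹ is an automorphism of Ω_n. -/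
open Matrix Set

attribute [local instance] Matrix.normedAddCommGroup Matrix.normedSpace

noncomputable section

namespace MobiusAux

variable {n : ℕ}

abbrev Mat (n : ℕ) := Matrix (Fin n) (Fin n) ℂ

def mobius (α γ : ℂ) (x : Mat n) : Mat n :=
  γ • ((x - α • 1) * (1 - (starRingEnd ℂ α) • x)⁻¹)

lemma isUnit_smul_mat {d : ℂ} (hd : d ≠ 0) {A : Mat n} (hA : IsUnit A) :
    IsUnit (d • A) := by
  rw [Matrix.isUnit_iff_isUnit_det] at hA ⊢
  rw [Matrix.det_smul, isUnit_iff_ne_zero] at *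
  exact mul_ne_zero (pow_ne_zero _ hd) hA

lemma isUnit_smul_one {d : ℂ} (hd : d ≠ 0) : IsUnit (d • (1 : Mat n)) :=
  isUnit_smul_mat hd isUnit_one

lemma not_unit_iff_mem {w : ℂ} {x : Mat n} :
    w ∈ spectrum ℂ x ↔ ¬ IsUnit (w • (1 : Mat n) - x) := by
  rw [spectrum.mem_iff, Algebra.algebraMap_eq_smul_one]

lemma isUnit_one_sub (α : ℂ) (hα : ‖α‖ < 1) {x : Mat n} (hx : x ∈ SpectralBallN n) :
    IsUnit ((1 : Mat n) - (starRingEnd ℂ α) • x) := by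
  set c := (starRingEnd ℂ) α with hc
  by_cases h0 : c = 0
  · simp [h0]
  · have hcn : ‖c‖ = ‖α‖ := RCLike.norm_conj α
    have hinv : IsUnit (c⁻¹ • (1 : Mat n) - x) := by
      by_contra h
      have hw : c⁻¹ ∈ spectrum ℂ x := not_unit_iff_mem.mpr h
      have := hx _ hw
      rw [norm_inv, hcn] at this
      have hα0 : 0 < ‖α‖ := by
        rw [← hcn]; exact norm_pos_iff.mpr h0
      have h1 : 1 < ‖α‖⁻¹ := (one_lt_inv₀ hα0).mpr hα
      linarith
    have key : (1 : Mat n) - c • x = c • (c⁻¹ • (1 : Mat n) - x) := by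
      rw [smul_sub, smul_smul, mul_inv_cancel₀ h0, one_smul]
    rw [key]
    exact isUnit_smul_mat h0 hinv


lemma normSq_identity (z α γ : ℂ) (hγ : ‖γ‖ = 1) :
    Complex.normSq (z + γ*α) - Complex.normSq (z * (starRingEnd ℂ α) + γ)
      = (Complex.normSq z - 1) * (1 - Complex.normSq α) := by
  have hγ2 : γ.re^2 + γ.im^2 = 1 := by
    have := Complex.normSq_eq_norm_sq γ
    rw [hγ] at this
    simpa [Complex.normSq_apply, pow_two] using this
  simp only [Complex.normSq_apply, Complex.add_re, Complex.add_im, Complex.mul_re,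
    Complex.mul_im, Complex.conj_re, Complex.conj_im]
  nlinarith [hγ2]

lemma mobius_mapsTo (α γ : ℂ) (hα : ‖α‖ < 1) (hγ : ‖γ‖ = 1) :
    MapsTo (mobius α γ) (SpectralBallN n) (SpectralBallN n) := by
  intro x hx
  set c := (starRingEnd ℂ) α with hc
  have hcn : ‖c‖ = ‖α‖ := RCLike.norm_conj α
  set u : Mat n := 1 - c • x with hu
  have hU : IsUnit u := isUnit_one_sub α hα hx
  have hUd : IsUnit u.det := (Matrix.isUnit_iff_isUnit_det u).mp hU
  have huu : u * u⁻¹ = 1 := Matrix.mul_nonsing_inv u hUd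
  have hUinv : IsUnit u⁻¹ := Matrix.isUnit_nonsing_inv_iff.mpr hU
  intro z hz
  by_contra hz1
  push_neg at hz1
  apply not_unit_iff_mem.mp hz
  -- z • 1 - mobius α γ x = ((z + γ*α) • 1 - (z*c + γ) • x) * u⁻¹
  have key : z • (1 : Mat n) - mobius α γ x
      = (((z + γ*α) • (1 : Mat n) - (z*c + γ) • x)) * u⁻¹ := by
    have e1 : (z + γ*α) • (1 : Mat n) - (z*c + γ) • x = z • u - γ • (x - α • 1) := by
      rw [hu]
      module
    rw [e1, sub_mul, Matrix.smul_mul, Matrix.smul_mul, huu, mobius]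
  rw [key]
  apply IsUnit.mul _ hUinv
  by_cases hd : z*c + γ = 0
  · rw [hd, zero_smul, sub_zero]
    apply isUnit_smul_one
    -- z + γ*α ≠ 0 : since γ = -z*c, z + γα = z*(1 - c*α), z ≠ 0
    have hz0 : z ≠ 0 := by
      intro h; rw [h] at hz1; simp at hz1; linarith
    have hγ' : γ = -(z*c) := by linear_combination hd
    have h1 : (1 : ℂ) - c*α ≠ 0 := by
      intro h
      have : (1:ℂ) = c * α := by linear_combination h
      have := congrArg norm this
      rw [norm_mul, hcn, norm_one] at this
      nlinarith [norm_nonneg α]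
    intro h
    rw [hγ'] at h
    apply hz0
    have : z * (1 - c*α) = 0 := by linear_combination h
    rcases mul_eq_zero.mp this with h' | h'
    · exact h'
    · exact absurd h' h1
  · -- factor out d
    set d := z*c + γ with hdd
    set w := (z + γ*α) / d with hw
    have e2 : (z + γ*α) • (1 : Mat n) - d • x = d • (w • (1 : Mat n) - x) := by
      rw [smul_sub, smul_smul, hw, mul_div_cancel₀ _ hd]
    rw [e2]
    apply isUnit_smul_mat hd
    by_contra h
    have hwspec : w ∈ spectrum ℂ x := not_unit_iff_mem.mpr h
    have hw1 := hx _ hwspec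
    -- but ‖w‖ ≥ 1
    have hid := normSq_identity z α γ hγ
    have hz2 : 1 ≤ Complex.normSq z := by
      rw [Complex.normSq_eq_norm_sq]
      nlinarith
    have hα2 : Complex.normSq α ≤ 1 := by
      rw [Complex.normSq_eq_norm_sq]
      nlinarith [norm_nonneg α]
    have hge : Complex.normSq d ≤ Complex.normSq (z + γ*α) := by
      rw [hdd]; nlinarith
    have hnd : (0:ℝ) < ‖d‖ := norm_pos_iff.mpr hd
    have hnorm : ‖d‖ ≤ ‖z + γ*α‖ := by
      have := hge
      rw [Complex.normSq_eq_norm_sq, Complex.normSq_eq_norm_sq] at this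
      nlinarith [norm_nonneg (z + γ*α)]
    have : (1:ℝ) ≤ ‖w‖ := by
      rw [hw, norm_div]
      rw [le_div_iff₀ hnd, one_mul]
      exact hnorm
    linarith


lemma mobius_comp (α γ : ℂ) (hα : ‖α‖ < 1) (hγ : ‖γ‖ = 1) {x : Mat n}
    (hx : x ∈ SpectralBallN n) :
    mobius (-(α*γ)) ((starRingEnd ℂ) γ) (mobius α γ x) = x := by
  set c := (starRingEnd ℂ) α with hc
  have hcn : ‖c‖ = ‖α‖ := RCLike.norm_conj α
  set u : Mat n := 1 - c • x with hu
  have hU : IsUnit u := isUnit_one_sub α hα hx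
  have hUd : IsUnit u.det := (Matrix.isUnit_iff_isUnit_det u).mp hU
  have huu : u * u⁻¹ = 1 := Matrix.mul_nonsing_inv u hUd
  have huu' : u⁻¹ * u = 1 := Matrix.nonsing_inv_mul u hUd
  have hγγ : γ * (starRingEnd ℂ) γ = 1 := by
    rw [Complex.mul_conj]
    norm_cast
    rw [Complex.normSq_eq_norm_sq, hγ, one_pow]
  have h1 : (1:ℂ) - α*c ≠ 0 := by
    intro h
    have h' : (1:ℂ) = α*c := by linear_combination h
    have := congrArg norm h'
    rw [norm_mul, hcn, norm_one] at this
    nlinarith [norm_nonneg α]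
  set y := mobius α γ x with hy
  have hstarneg : (starRingEnd ℂ) (-(α*γ)) = -(c * (starRingEnd ℂ) γ) := by
    rw [map_neg, _root_.map_mul, ← hc]
  have hA : y - (-(α*γ)) • (1 : Mat n) = (γ*(1-α*c)) • (x * u⁻¹) := by
    rw [hy, mobius, ← hc, ← hu, neg_smul, sub_neg_eq_add]
    have e : (α*γ) • (1 : Mat n) = γ • ((α • u) * u⁻¹) := by
      rw [smul_mul_assoc, huu, smul_smul]
      module
    rw [e, ← smul_add, ← add_mul]
    have e2 : (x - α • 1) + α • u = (1-α*c) • x := by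
      rw [hu]; module
    rw [e2, smul_mul_assoc, smul_smul]
  have hB : (1 : Mat n) - (starRingEnd ℂ) (-(α*γ)) • y = (1-α*c) • u⁻¹ := by
    rw [hstarneg, neg_smul, sub_neg_eq_add, hy, mobius, ← hc, ← hu]
    rw [smul_smul]
    have e3 : (c * (starRingEnd ℂ) γ * γ) = c := by
      rw [mul_assoc, mul_comm ((starRingEnd ℂ) γ) γ, hγγ, mul_one]
    rw [e3]
    have e4 : u + c • (x - α • 1) = (1-α*c) • (1 : Mat n) := by
      rw [hu]; module
    calc (1 : Mat n) + c • ((x - α • 1) * u⁻¹)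
        = (u + c • (x - α • 1)) * u⁻¹ := by rw [add_mul, huu, smul_mul_assoc]
      _ = ((1-α*c) • (1 : Mat n)) * u⁻¹ := by rw [e4]
      _ = (1-α*c) • u⁻¹ := by rw [smul_mul_assoc, one_mul]
  have hC : ((1-α*c) • u⁻¹)⁻¹ = (1-α*c)⁻¹ • u := by
    apply Matrix.inv_eq_right_inv
    rw [smul_mul_assoc, Matrix.mul_smul, smul_smul, huu', mul_inv_cancel₀ h1, one_smul]
  rw [mobius, hA, hB, hC]
  have hsc : (starRingEnd ℂ) γ * (γ * (1 - α*c)) * (1 - α*c)⁻¹ = 1 := by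
    field_simp
    linear_combination hγγ
  rw [smul_mul_assoc, Matrix.mul_smul, Matrix.mul_assoc, huu', Matrix.mul_one,
    smul_smul, smul_smul, hsc, one_smul]


attribute [local instance] Matrix.normedAddCommGroup Matrix.normedSpace

lemma diff_entry (i j : Fin n) : Differentiable ℂ (fun x : Mat n => x i j) := by
  have h1 : Differentiable ℂ (fun x : Mat n => x i) :=
    differentiable_pi.mp differentiable_id i
  exact differentiable_pi.mp h1 j

lemma diff_prod {ι : Type*} (t : Finset ι) {f : ι → Mat n → ℂ} {s : Set (Mat n)}
    (h : ∀ i ∈ t, DifferentiableOn ℂ (f i) s) :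
    DifferentiableOn ℂ (fun x => ∏ i ∈ t, f i x) s := by
  classical
  induction t using Finset.induction_on with
  | empty => simpa using differentiableOn_const (1:ℂ)
  | insert a t hnot ih =>
    simp only [Finset.prod_insert hnot]
    exact (h a (Finset.mem_insert_self a t)).mul
      (ih fun i hi => h i (Finset.mem_insert_of_mem hi))

lemma diff_det {M : Mat n → Mat n} {s : Set (Mat n)}
    (h : ∀ i j, DifferentiableOn ℂ (fun x => M x i j) s) :
    DifferentiableOn ℂ (fun x => (M x).det) s := by
  simp only [Matrix.det_apply, Units.smul_def, zsmul_eq_mul]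
  apply DifferentiableOn.fun_sum
  intro σ _
  exact (diff_prod Finset.univ fun i _ => h (σ i) i).const_mul _

lemma diff_adjugate {M : Mat n → Mat n} {s : Set (Mat n)}
    (h : ∀ i j, DifferentiableOn ℂ (fun x => M x i j) s) (i j : Fin n) :
    DifferentiableOn ℂ (fun x => (M x).adjugate i j) s := by
  simp only [Matrix.adjugate_apply]
  apply diff_det
  intro i' j'
  simp only [Matrix.updateRow_apply]
  by_cases hij : i' = j
  · simp [hij, differentiableOn_const]
  · simpa [hij] using h i' j'

lemma mobius_diff (α γ : ℂ) (hα : ‖α‖ < 1) :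
    DifferentiableOn ℂ (mobius α γ (n := n)) (SpectralBallN n) := by
  set c := (starRingEnd ℂ) α with hc
  set U : Mat n → Mat n := fun x => 1 - c • x with hUdef
  have hent : ∀ i j, DifferentiableOn ℂ (fun x => U x i j) (SpectralBallN n) := by
    intro i j
    have : (fun x : Mat n => U x i j)
        = fun x => (1 : Mat n) i j - c * x i j := by
      funext x
      simp [hUdef, Matrix.sub_apply, Matrix.smul_apply, smul_eq_mul]
    rw [this]
    exact (differentiableOn_const _).sub ((diff_entry i j).differentiableOn.const_mul c)
  have hdet : DifferentiableOn ℂ (fun x => (U x).det) (SpectralBallN n) := diff_det hent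
  have hdet0 : ∀ x ∈ SpectralBallN n, (U x).det ≠ 0 := by
    intro x hx
    have := (Matrix.isUnit_iff_isUnit_det _).mp (isUnit_one_sub α hα hx)
    exact IsUnit.ne_zero this
  apply differentiableOn_pi.mpr
  intro i
  apply differentiableOn_pi.mpr
  intro j
  have hrw : (fun x : Mat n => mobius α γ x i j)
      = fun x => γ * ∑ k, (x i k - α * (1 : Mat n) i k) *
          ((U x).det⁻¹ * (U x).adjugate k j) := by
    funext x
    simp only [mobius, ← hc, hUdef, Matrix.smul_apply, smul_eq_mul, Matrix.mul_apply,
      Matrix.sub_apply, Matrix.inv_def, Ring.inverse_eq_inv']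
  rw [hrw]
  apply DifferentiableOn.const_mul
  apply DifferentiableOn.fun_sum
  intro k _
  apply DifferentiableOn.mul
  · exact ((diff_entry i k).differentiableOn).sub (differentiableOn_const _)
  · exact (hdet.inv hdet0).mul (diff_adjugate hent k j)

end MobiusAux

/-- For `|α| < 1` and `|γ| = 1`, the matrix `I − ᾱ x` is invertible for every `x` in the
spectral ball, and the Möbius map `m_{α,γ} : x ↦ γ (x − α I)(I − ᾱ x)⁻¹` is an automorphism
of the spectral ball. -/
theorem mobius_map_is_automorphism
    (n : ℕ) (hn : 1 ≤ n) (α γ : ℂ) (hα : ‖α‖ < 1) (hγ : ‖γ‖ = 1) :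
    (∀ x ∈ SpectralBallN n,
      IsUnit ((1 : Matrix (Fin n) (Fin n) ℂ) - (starRingEnd ℂ α) • x)) ∧
    IsAutomorphismOn (SpectralBallN n)
      (fun x => γ • ((x - α • (1 : Matrix (Fin n) (Fin n) ℂ)) *
        ((1 : Matrix (Fin n) (Fin n) ℂ) - (starRingEnd ℂ α) • x)⁻¹)) := by
  have hγγ : γ * (starRingEnd ℂ) γ = 1 := by
    rw [Complex.mul_conj]
    norm_cast
    rw [Complex.normSq_eq_norm_sq, hγ, one_pow]
  have hα' : ‖-(α*γ)‖ < 1 := by rw [norm_neg, norm_mul, hγ, mul_one]; exact hα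
  have hγ' : ‖(starRingEnd ℂ) γ‖ = 1 := by rw [RCLike.norm_conj]; exact hγ
  refine ⟨fun x hx => MobiusAux.isUnit_one_sub α hα hx,
    MobiusAux.mobius_diff α γ hα,
    MobiusAux.mobius_mapsTo α γ hα hγ,
    MobiusAux.mobius (-(α*γ)) ((starRingEnd ℂ) γ),
    MobiusAux.mobius_diff _ _ hα',
    MobiusAux.mobius_mapsTo _ _ hα' hγ',
    fun x hx => MobiusAux.mobius_comp α γ hα hγ hx,
    fun x hx => ?_⟩
  have h := MobiusAux.mobius_comp (-(α*γ)) ((starRingEnd ℂ) γ) hα' hγ' hx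
  have e1 : -((-(α*γ)) * (starRingEnd ℂ) γ) = α := by linear_combination α * hγγ
  have e2 : (starRingEnd ℂ) ((starRingEnd ℂ) γ) = γ := Complex.conj_conj γ
  rw [e1, e2] at h
  exact h
end
end

section
/- Let w ∈ ℂ[x₁₁, x₁₂, x₂₁, x₂₂] be a polynomial such that x₁₂·(∂w/∂x₁₂) − x₂₁·(∂w/∂x₂₁) belongs to the subalgebra ℂ[x₁₁, x₂₂, x₁₂x₂₁] of ℂ[x₁₁, x₁₂, x₂₁, x₂₂] generated by x₁₁, x₂₂ and the product x₁₂x₂₁. Then w itself belongs to ℂ[x₁₁, x₂₂, x₁₂x₂₁], and consequently x₁₂·(∂w/∂x₁₂) − x₂₁·(∂w/∂x₂₁) = 0. -/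
open MvPolynomial


private lemma key_coeff (i : Fin 4) (p : MvPolynomial (Fin 4) ℂ) (m : Fin 4 →₀ ℕ) :
    coeff m (X i * pderiv i p) = (m i : ℂ) * coeff m p := by
  induction p using MvPolynomial.induction_on' with
  | monomial s a =>
    rw [pderiv_monomial]
    rw [X, monomial_mul, one_mul]
    classical
    rw [coeff_monomial, coeff_monomial]
    by_cases hsi : s i = 0
    · simp only [hsi, Nat.cast_zero, mul_zero]
      split_ifs with h1 h2 <;> simp_all
    · have : Finsupp.single i 1 + (s - Finsupp.single i 1) = s := by
        ext j
        by_cases hj : j = i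
        · subst hj; simp [Finsupp.single_apply]; omega
        · simp [Finsupp.single_apply, Ne.symm hj, hj]
      rw [this]
      split_ifs with h1
      · subst h1; ring
      · simp
  | add p q hp hq =>
    rw [map_add, mul_add, coeff_add, coeff_add, hp, hq, mul_add]

private noncomputable def balanced : Subalgebra ℂ (MvPolynomial (Fin 4) ℂ) where
  carrier := {p | ∀ m : Fin 4 →₀ ℕ, m 1 ≠ m 2 → coeff m p = 0}
  add_mem' := by
    intro p q hp hq m hm
    rw [coeff_add, hp m hm, hq m hm, add_zero]
  mul_mem' := by
    intro p q hp hq m hm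
    rw [coeff_mul]
    apply Finset.sum_eq_zero
    intro x hx
    rw [Finset.HasAntidiagonal.mem_antidiagonal] at hx
    by_cases h1 : x.1 1 = x.1 2
    · have h2 : x.2 1 ≠ x.2 2 := by
        intro h2; apply hm
        rw [← hx]
        simp [Finsupp.add_apply, h1, h2]
      rw [hq _ h2, mul_zero]
    · rw [hp _ h1, zero_mul]
  algebraMap_mem' := by
    intro c m hm
    have hm0 : m ≠ 0 := by rintro rfl; simp at hm
    classical
    simp [algebraMap_eq, coeff_C, Ne.symm hm0]

private lemma mem_adjoin_of_balanced (p : MvPolynomial (Fin 4) ℂ)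
    (hp : ∀ m : Fin 4 →₀ ℕ, m 1 ≠ m 2 → coeff m p = 0) :
    p ∈ Algebra.adjoin ℂ ({X 0, X 3, X 1 * X 2} : Set (MvPolynomial (Fin 4) ℂ)) := by
  rw [p.as_sum]
  apply Subalgebra.sum_mem
  intro m hm
  by_cases hbal : m 1 = m 2
  · have hX0 : (X 0 : MvPolynomial (Fin 4) ℂ) ∈ Algebra.adjoin ℂ
        ({X 0, X 3, X 1 * X 2} : Set (MvPolynomial (Fin 4) ℂ)) :=
      Algebra.subset_adjoin (by simp)
    have hX3 : (X 3 : MvPolynomial (Fin 4) ℂ) ∈ Algebra.adjoin ℂ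
        ({X 0, X 3, X 1 * X 2} : Set (MvPolynomial (Fin 4) ℂ)) :=
      Algebra.subset_adjoin (by simp)
    have hX12 : (X 1 * X 2 : MvPolynomial (Fin 4) ℂ) ∈ Algebra.adjoin ℂ
        ({X 0, X 3, X 1 * X 2} : Set (MvPolynomial (Fin 4) ℂ)) :=
      Algebra.subset_adjoin (by simp)
    have hmono : (monomial m (coeff m p) : MvPolynomial (Fin 4) ℂ) =
        C (coeff m p) * (X 0 ^ m 0 * X 3 ^ m 3 * (X 1 * X 2) ^ m 1) := by
      rw [monomial_eq, Finsupp.prod_fintype _ _ (fun i => pow_zero _), Fin.prod_univ_four]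
      rw [mul_pow]
      nth_rewrite 3 [hbal]
      ring
    rw [hmono]
    exact Subalgebra.mul_mem _ (Subalgebra.algebraMap_mem _ _)
      (Subalgebra.mul_mem _ (Subalgebra.mul_mem _ (Subalgebra.pow_mem _ hX0 _)
        (Subalgebra.pow_mem _ hX3 _)) (Subalgebra.pow_mem _ hX12 _))
  · rw [hp m hbal, monomial_zero]
    exact Subalgebra.zero_mem _
/-- If `x₁₂ ∂w/∂x₁₂ − x₂₁ ∂w/∂x₂₁` lies in the subalgebra `ℂ[x₁₁, x₂₂, x₁₂x₂₁]`, then `w`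
itself lies in `ℂ[x₁₁, x₂₂, x₁₂x₂₁]` and consequently `x₁₂ ∂w/∂x₁₂ − x₂₁ ∂w/∂x₂₁ = 0`. Here
the variables are indexed so that `X 0 = x₁₁`, `X 1 = x₁₂`, `X 2 = x₂₁`, `X 3 = x₂₂`. -/
theorem mem_subalgebra_of_euler_field
    (w : MvPolynomial (Fin 4) ℂ)
    (h : X 1 * pderiv 1 w - X 2 * pderiv 2 w ∈
      Algebra.adjoin ℂ ({X 0, X 3, X 1 * X 2} : Set (MvPolynomial (Fin 4) ℂ))) :
    w ∈ Algebra.adjoin ℂ ({X 0, X 3, X 1 * X 2} : Set (MvPolynomial (Fin 4) ℂ)) ∧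
      X 1 * pderiv 1 w - X 2 * pderiv 2 w = 0 := by
  have hle : Algebra.adjoin ℂ ({X 0, X 3, X 1 * X 2} : Set (MvPolynomial (Fin 4) ℂ)) ≤
      balanced := by
    apply Algebra.adjoin_le
    rintro p (rfl | rfl | rfl)
    · intro m hm
      classical
      rw [X, coeff_monomial]
      split_ifs with h1
      · exfalso; apply hm; subst h1; simp [Finsupp.single_apply]
      · rfl
    · intro m hm
      classical
      rw [X, coeff_monomial]
      split_ifs with h1
      · exfalso; apply hm; subst h1; simp [Finsupp.single_apply]
      · rfl
    · intro m hm
      classical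
      rw [X, X, monomial_mul, one_mul, coeff_monomial]
      split_ifs with h1
      · exfalso; apply hm; subst h1; simp [Finsupp.single_apply]
      · rfl
  have hEw : ∀ m : Fin 4 →₀ ℕ, m 1 ≠ m 2 →
      coeff m (X 1 * pderiv 1 w - X 2 * pderiv 2 w) = 0 := hle h
  have hw : ∀ m : Fin 4 →₀ ℕ, m 1 ≠ m 2 → coeff m w = 0 := by
    intro m hm
    have := hEw m hm
    rw [coeff_sub, key_coeff, key_coeff] at this
    have hne : ((m 1 : ℂ) - (m 2 : ℂ)) ≠ 0 := by
      intro hc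
      apply hm
      exact_mod_cast sub_eq_zero.mp hc
    have : ((m 1 : ℂ) - (m 2 : ℂ)) * coeff m w = 0 := by linear_combination this
    exact (mul_eq_zero.mp this).resolve_left hne
  constructor
  · exact mem_adjoin_of_balanced w hw
  · ext m
    rw [coeff_sub, key_coeff, key_coeff, coeff_zero]
    by_cases hbal : m 1 = m 2
    · rw [hbal]; ring
    · rw [hw m hbal]; ring
end
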